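/- arXiv:1007.4152 — 7 statements merged into one kernel-verified Lean document; each statement's English description precedes it below -/
import Mathlib

section
/- Let f : [0,∞) → ℝ be continuous on [0,∞) and differentiable on (0,∞) with f′ operator antitone on (0,∞), and let M₁,…,M_s be m×m real symmetric positive semidefinite matrices. Then the set function F : 2^{[s]} → ℝ defined by F(I) = trace f(Σ_{i∈I} M_i) is submodular: F(I) + F(J) ≥ F(I∪J) + F(I∩J) for all I, J ⊆ {1,…,s}. -/
open Matrix in
/-- Applying a real function to a real symmetric matrix via the spectral
decomposition: `f(A) = U Diag(f(λ₁),…,f(λ_m)) Uᵀ`. Junk value `0` on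
non-symmetric input. -/
noncomputable def matFun (f : ℝ → ℝ) {m : ℕ} (A : Matrix (Fin m) (Fin m) ℝ) :
    Matrix (Fin m) (Fin m) ℝ :=
  if hA : A.IsHermitian then
    (hA.eigenvectorUnitary : Matrix (Fin m) (Fin m) ℝ) *
      Matrix.diagonal (fun i => f (hA.eigenvalues i)) *
      star (hA.eigenvectorUnitary : Matrix (Fin m) (Fin m) ℝ)
  else 0

/-- `g` is operator antitone on `(0,∞)` : for every dimension `m` and all
positive definite matrices `A ⪯ B` (Löwner order, i.e. `B - A` positive
semidefinite), the matrix `g(A) - g(B)` is positive semidefinite. -/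
def OperatorAntitoneOn (g : ℝ → ℝ) : Prop :=
  ∀ (m : ℕ) (A B : Matrix (Fin m) (Fin m) ℝ), A.PosDef → B.PosDef →
    (B - A).PosSemidef → (matFun g A - matFun g B).PosSemidef

open Matrix

section Aux

lemma conj_diag_apply {m : ℕ} (U : Matrix (Fin m) (Fin m) ℝ) (d : Fin m → ℝ) (i k : Fin m) :
    (U * diagonal d * star U) i k = ∑ j, d j * (U i j * U k j) := by
  rw [Matrix.mul_apply]
  simp only [Matrix.mul_diagonal, Matrix.star_apply, star_trivial]
  exact Finset.sum_congr rfl fun j _ => by ring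

lemma trace_form {m : ℕ} (U V : Matrix (Fin m) (Fin m) ℝ) (d e : Fin m → ℝ) :
    ((U * diagonal d * star U) * (V * diagonal e * star V)).trace
      = ∑ j, ∑ l, d j * e l * ((star U * V) j l)^2 := by
  have h1 : ((U * diagonal d * star U) * (V * diagonal e * star V)).trace
      = (diagonal d * ((star U * V) * diagonal e * star (star U * V))).trace := by
    simp only [Matrix.mul_assoc]
    rw [Matrix.trace_mul_comm U]
    simp only [Matrix.mul_assoc, StarMul.star_mul, star_star]
  rw [h1]
  have h2 : ∀ j, (diagonal d * ((star U * V) * diagonal e * star (star U * V))) j j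
      = ∑ l, d j * e l * ((star U * V) j l)^2 := by
    intro j
    rw [Matrix.diagonal_mul, conj_diag_apply, Finset.mul_sum]
    exact Finset.sum_congr rfl fun l _ => by ring
  simp only [Matrix.trace, Matrix.diag, h2]

lemma trace_matFun {m : ℕ} (g : ℝ → ℝ) {A : Matrix (Fin m) (Fin m) ℝ} (hA : A.IsHermitian) :
    (matFun g A).trace = ∑ i, g (hA.eigenvalues i) := by
  rw [matFun, dif_pos hA, Matrix.trace_mul_cycle, Unitary.coe_star_mul_self, Matrix.one_mul,
    Matrix.trace_diagonal]

lemma trace_eq_sum_eig {m : ℕ} {A : Matrix (Fin m) (Fin m) ℝ} (hA : A.IsHermitian) :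
    A.trace = ∑ i, hA.eigenvalues i := by
  conv_lhs => rw [hA.spectral_theorem]
  rw [Unitary.conjStarAlgAut_apply, Matrix.trace_mul_cycle, Unitary.coe_star_mul_self, Matrix.one_mul, Matrix.trace_diagonal]
  simp

lemma psd_trace_nonneg {m : ℕ} {P : Matrix (Fin m) (Fin m) ℝ} (hP : P.PosSemidef) :
    0 ≤ P.trace := by
  refine Finset.sum_nonneg fun i _ => ?_
  have := hP.dotProduct_mulVec_nonneg (Pi.single i 1)
  simpa [dotProduct, Matrix.mulVec, Pi.single_apply] using this

open scoped MatrixOrder in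
lemma psd_trace_mul_nonneg {m : ℕ} {P Q : Matrix (Fin m) (Fin m) ℝ}
    (hP : P.PosSemidef) (hQ : Q.PosSemidef) : 0 ≤ (P * Q).trace := by
  have hS : (CFC.sqrt P).PosSemidef := (CFC.sqrt_nonneg P).posSemidef
  have h1 : P * Q = CFC.sqrt P * (CFC.sqrt P * Q) := by
    rw [← Matrix.mul_assoc, CFC.sqrt_mul_sqrt_self P hP.nonneg]
  rw [h1, Matrix.trace_mul_comm, Matrix.mul_assoc]
  have h2 : (CFC.sqrt P * Q * CFC.sqrt P).PosSemidef := by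
    have := hQ.mul_mul_conjTranspose_same (CFC.sqrt P)
    rwa [hS.1.eq] at this
  exact psd_trace_nonneg (by rwa [Matrix.mul_assoc] at h2)

lemma psd_smul {m : ℕ} {Δ : Matrix (Fin m) (Fin m) ℝ} (h : Δ.PosSemidef) {t : ℝ}
    (ht : 0 ≤ t) : (t • Δ).PosSemidef := by
  refine ⟨?_, fun x => ?_⟩
  · unfold Matrix.IsHermitian
    rw [Matrix.conjTranspose_smul, h.1.eq]
    simp
  · exact (h.smul ht).2 x

lemma scalar_antitone {g : ℝ → ℝ} (hg : OperatorAntitoneOn g) {a b : ℝ}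
    (ha : 0 < a) (hab : a ≤ b) : g b ≤ g a := by
  have hb : 0 < b := lt_of_lt_of_le ha hab
  set A : Matrix (Fin 1) (Fin 1) ℝ := Matrix.diagonal (fun _ => a) with hA
  set B : Matrix (Fin 1) (Fin 1) ℝ := Matrix.diagonal (fun _ => b) with hB
  have hApd : A.PosDef := Matrix.posDef_diagonal_iff.mpr fun _ => ha
  have hBpd : B.PosDef := Matrix.posDef_diagonal_iff.mpr fun _ => hb
  have hBA : (B - A).PosSemidef := by
    rw [hA, hB, Matrix.diagonal_sub]
    exact Matrix.posSemidef_diagonal_iff.mpr fun _ => by simp [sub_nonneg, hab]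
  have h := hg 1 A B hApd hBpd hBA
  have htr := psd_trace_nonneg h
  rw [Matrix.trace_sub] at htr
  have keyA : (matFun g A).trace = g a := by
    rw [trace_matFun g hApd.1]
    have h0 : hApd.1.eigenvalues 0 = a := by
      have := trace_eq_sum_eig hApd.1
      simpa [Matrix.trace, Fin.sum_univ_one, hA] using this.symm
    simp [Fin.sum_univ_one, h0]
  have keyB : (matFun g B).trace = g b := by
    rw [trace_matFun g hBpd.1]
    have h0 : hBpd.1.eigenvalues 0 = b := by
      have := trace_eq_sum_eig hBpd.1
      simpa [Matrix.trace, Fin.sum_univ_one, hB] using this.symm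
    simp [Fin.sum_univ_one, h0]
  rw [keyA, keyB] at htr
  linarith

lemma tangent_le {f : ℝ → ℝ} (hf_diff : DifferentiableOn ℝ f (Set.Ioi (0:ℝ)))
    (hanti : ∀ a b : ℝ, 0 < a → a ≤ b → deriv f b ≤ deriv f a)
    {a b : ℝ} (ha : 0 < a) (hb : 0 < b) :
    f b ≤ f a + deriv f a * (b - a) := by
  rcases lt_trichotomy a b with h | h | h
  · obtain ⟨c, hc, hceq⟩ := exists_deriv_eq_slope f h
      (hf_diff.continuousOn.mono (fun x hx => lt_of_lt_of_le ha hx.1))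
      (hf_diff.mono (fun x hx => lt_trans ha hx.1))
    have h1 : f b - f a = deriv f c * (b - a) := by
      rw [hceq]; field_simp [sub_ne_zero.mpr (ne_of_gt h)]
    have h2 : deriv f c ≤ deriv f a := hanti a c ha (le_of_lt hc.1)
    nlinarith [hc.1, hc.2]
  · simp [h]
  · obtain ⟨c, hc, hceq⟩ := exists_deriv_eq_slope f h
      (hf_diff.continuousOn.mono (fun x hx => lt_of_lt_of_le hb hx.1))
      (hf_diff.mono (fun x hx => lt_trans hb hx.1))
    have h1 : f a - f b = deriv f c * (a - b) := by
      rw [hceq]; field_simp [sub_ne_zero.mpr (ne_of_gt h)]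
    have h2 : deriv f a ≤ deriv f c := hanti c a (lt_trans hb hc.1) (le_of_lt hc.2)
    nlinarith [hc.1, hc.2]

/-- Klein-type inequality. -/
lemma klein {m : ℕ} (f : ℝ → ℝ) {X Y : Matrix (Fin m) (Fin m) ℝ}
    (hX : X.IsHermitian) (hY : Y.IsHermitian)
    (htang : ∀ i j, f (hY.eigenvalues j) ≤ f (hX.eigenvalues i)
      + deriv f (hX.eigenvalues i) * (hY.eigenvalues j - hX.eigenvalues i)) :
    (matFun f Y).trace ≤ (matFun f X).trace + (matFun (deriv f) X * (Y - X)).trace := by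
  set U := (hX.eigenvectorUnitary : Matrix (Fin m) (Fin m) ℝ) with hU
  set V := (hY.eigenvectorUnitary : Matrix (Fin m) (Fin m) ℝ) with hV
  set W := star U * V with hW
  set lam := hX.eigenvalues
  set mu := hY.eigenvalues
  have hUU : U * star U = 1 := Matrix.mem_unitaryGroup_iff.mp hX.eigenvectorUnitary.2
  have hUU' : star U * U = 1 := Matrix.mem_unitaryGroup_iff'.mp hX.eigenvectorUnitary.2
  have hVV : V * star V = 1 := Matrix.mem_unitaryGroup_iff.mp hY.eigenvectorUnitary.2
  have hVV' : star V * V = 1 := Matrix.mem_unitaryGroup_iff'.mp hY.eigenvectorUnitary.2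
  have hWW : W * star W = 1 := by
    rw [hW, StarMul.star_mul, star_star, Matrix.mul_assoc, ← Matrix.mul_assoc V,
      hVV, Matrix.one_mul, hUU']
  have hWW' : star W * W = 1 := by
    rw [hW, StarMul.star_mul, star_star, Matrix.mul_assoc, ← Matrix.mul_assoc U,
      hUU, Matrix.one_mul, hVV']
  have hrow : ∀ i, ∑ j, (W i j)^2 = 1 := by
    intro i
    have := congrFun (congrFun hWW i) i
    rw [Matrix.mul_apply] at this
    simpa [Matrix.star_apply, sq] using this
  have hcol : ∀ j, ∑ i, (W i j)^2 = 1 := by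
    intro j
    have := congrFun (congrFun hWW' j) j
    rw [Matrix.mul_apply] at this
    simp only [Matrix.star_apply, star_trivial, Matrix.one_apply_eq] at this
    rw [← this]
    exact Finset.sum_congr rfl fun i _ => by ring
  have hYsp : Y = V * diagonal mu * star V := by
    have := hY.spectral_theorem
    simpa using this
  have hXsp : X = U * diagonal lam * star U := by
    have := hX.spectral_theorem
    simpa using this
  have hmatf' : matFun (deriv f) X = U * diagonal (fun i => deriv f (lam i)) * star U := by
    rw [matFun, dif_pos hX]
  have T3 : (matFun (deriv f) X * Y).trace
      = ∑ i, ∑ j, deriv f (lam i) * mu j * (W i j)^2 := by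
    rw [hmatf']
    conv_lhs => rw [hYsp]
    exact trace_form U V _ mu
  have T4 : (matFun (deriv f) X * X).trace
      = ∑ i, ∑ j, deriv f (lam i) * lam j * ((star U * U) i j)^2 := by
    rw [hmatf']
    conv_lhs => rw [hXsp]
    exact trace_form U U _ lam
  have T4' : (matFun (deriv f) X * X).trace = ∑ i, deriv f (lam i) * lam i := by
    rw [T4, hUU']
    refine Finset.sum_congr rfl fun i _ => ?_
    rw [Finset.sum_eq_single i]
    · simp
    · intro j _ hj
      simp [Matrix.one_apply, (Ne.symm hj)]
    · simp
  have TY : (matFun f Y).trace = ∑ i, ∑ j, (W i j)^2 * f (mu j) := by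
    rw [trace_matFun f hY, Finset.sum_comm (γ := Fin m)]
    refine Finset.sum_congr rfl fun j _ => ?_
    rw [← Finset.sum_mul, hcol j, one_mul]
  have TX : (matFun f X).trace = ∑ i, ∑ j, (W i j)^2 * f (lam i) := by
    rw [trace_matFun f hX]
    refine Finset.sum_congr rfl fun i _ => ?_
    rw [← Finset.sum_mul, hrow i, one_mul]
  have T4'' : (matFun (deriv f) X * X).trace
      = ∑ i, ∑ j, (W i j)^2 * (deriv f (lam i) * lam i) := by
    rw [T4']
    refine Finset.sum_congr rfl fun i _ => ?_
    rw [← Finset.sum_mul, hrow i, one_mul]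
  have hsplit : (matFun (deriv f) X * (Y - X)).trace
      = (matFun (deriv f) X * Y).trace - (matFun (deriv f) X * X).trace := by
    rw [Matrix.mul_sub, Matrix.trace_sub]
  rw [TY, TX, hsplit, T3, T4'']
  have key : ∀ i j, (W i j)^2 * f (mu j) ≤ (W i j)^2 * f (lam i)
      + (deriv f (lam i) * mu j * (W i j)^2 - (W i j)^2 * (deriv f (lam i) * lam i)) := by
    intro i j
    nlinarith [mul_le_mul_of_nonneg_left (htang i j) (sq_nonneg (W i j))]
  calc ∑ i, ∑ j, (W i j)^2 * f (mu j)
      ≤ ∑ i, ∑ j, ((W i j)^2 * f (lam i)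
        + (deriv f (lam i) * mu j * (W i j)^2 - (W i j)^2 * (deriv f (lam i) * lam i))) :=
        Finset.sum_le_sum fun i _ => Finset.sum_le_sum fun j _ => key i j
    _ = ∑ i, ∑ j, (W i j)^2 * f (lam i)
        + (∑ i, ∑ j, deriv f (lam i) * mu j * (W i j)^2
          - ∑ i, ∑ j, (W i j)^2 * (deriv f (lam i) * lam i)) := by
        simp [Finset.sum_add_distrib, Finset.sum_sub_distrib]

lemma det_smul_one_sub {m : ℕ} {A : Matrix (Fin m) (Fin m) ℝ} (hA : A.IsHermitian) (t : ℝ) :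
    (t • (1 : Matrix (Fin m) (Fin m) ℝ) - A).det = ∏ i, (t - hA.eigenvalues i) := by
  set U := (hA.eigenvectorUnitary : Matrix (Fin m) (Fin m) ℝ)
  have hUU : U * star U = 1 := Matrix.mem_unitaryGroup_iff.mp hA.eigenvectorUnitary.2
  have h1 : t • (1 : Matrix (Fin m) (Fin m) ℝ) - A
      = U * (Matrix.diagonal (fun i => t - hA.eigenvalues i)) * star U := by
    have h2 : t • (1 : Matrix (Fin m) (Fin m) ℝ)
        = U * (t • (1 : Matrix (Fin m) (Fin m) ℝ)) * star U := by
      rw [Matrix.mul_smul, Matrix.smul_mul, Matrix.mul_one, hUU]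
    conv_lhs => rw [h2, hA.spectral_theorem]
    rw [Unitary.conjStarAlgAut_apply, ← Matrix.sub_mul, ← Matrix.mul_sub]
    congr 1
    rw [Matrix.smul_one_eq_diagonal, ← Matrix.diagonal_sub]
    congr 1
  rw [h1, Matrix.det_mul, Matrix.det_mul, mul_comm, ← mul_assoc, ← Matrix.det_mul,
    Matrix.mem_unitaryGroup_iff'.mp hA.eigenvectorUnitary.2, Matrix.det_one, one_mul,
    Matrix.det_diagonal]

lemma eig_multiset_shift {m : ℕ} {X : Matrix (Fin m) (Fin m) ℝ} (hX : X.IsHermitian) (ε : ℝ)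
    (hY : (X + ε • (1 : Matrix (Fin m) (Fin m) ℝ)).IsHermitian) :
    (Finset.univ.val.map hY.eigenvalues)
      = Finset.univ.val.map (fun i => hX.eigenvalues i + ε) := by
  have hdet : ∀ t : ℝ, ∏ i, (t - hY.eigenvalues i) = ∏ i, (t - (hX.eigenvalues i + ε)) := by
    intro t
    rw [← det_smul_one_sub hY t]
    have h : t • (1 : Matrix (Fin m) (Fin m) ℝ) - (X + ε • 1)
        = (t - ε) • (1 : Matrix (Fin m) (Fin m) ℝ) - X := by
      rw [sub_smul]; abel
    rw [h, det_smul_one_sub hX (t - ε)]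
    exact Finset.prod_congr rfl fun i _ => by ring
  have hpoly : (∏ i, (Polynomial.X - Polynomial.C (hY.eigenvalues i)))
      = ∏ i, (Polynomial.X - Polynomial.C (hX.eigenvalues i + ε)) := by
    apply Polynomial.funext
    intro t
    simp only [Polynomial.eval_prod, Polynomial.eval_sub, Polynomial.eval_X, Polynomial.eval_C]
    exact hdet t
  have h1 : ∀ (a : Fin m → ℝ), (∏ i, (Polynomial.X - Polynomial.C (a i)))
      = ((Finset.univ.val.map a).map (fun r => Polynomial.X - Polynomial.C r)).prod := by
    intro a
    rw [Multiset.map_map, Finset.prod_eq_multiset_prod]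
    rfl
  have h2 := congrArg Polynomial.roots hpoly
  rw [h1 hY.eigenvalues, h1 (fun i => hX.eigenvalues i + ε),
    Polynomial.roots_multiset_prod_X_sub_C, Polynomial.roots_multiset_prod_X_sub_C] at h2
  exact h2

lemma sum_g_eig_shift {m : ℕ} {X : Matrix (Fin m) (Fin m) ℝ} (hX : X.IsHermitian) (ε : ℝ)
    (hY : (X + ε • (1 : Matrix (Fin m) (Fin m) ℝ)).IsHermitian) (g : ℝ → ℝ) :
    ∑ i, g (hY.eigenvalues i) = ∑ i, g (hX.eigenvalues i + ε) := by
  have h := congrArg (fun s => (Multiset.map g s).sum) (eig_multiset_shift hX ε hY)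
  simpa [Finset.sum, Multiset.map_map, Function.comp_def] using h

end Aux

lemma main_pd (f : ℝ → ℝ) (hf_diff : DifferentiableOn ℝ f (Set.Ioi (0:ℝ)))
    (hf'_anti : OperatorAntitoneOn (deriv f)) {m : ℕ}
    {A B Δ : Matrix (Fin m) (Fin m) ℝ} (hA : A.PosDef) (hB : B.PosDef)
    (hBA : (B - A).PosSemidef) (hΔ : Δ.PosSemidef) :
    (matFun f (B + Δ)).trace + (matFun f A).trace
      ≤ (matFun f (A + Δ)).trace + (matFun f B).trace := by
  have hanti : ∀ a b : ℝ, 0 < a → a ≤ b → deriv f b ≤ deriv f a :=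
    fun a b ha h => scalar_antitone hf'_anti ha h
  have htan : ∀ a b : ℝ, 0 < a → 0 < b → f b ≤ f a + deriv f a * (b - a) :=
    fun a b ha hb => tangent_le hf_diff hanti ha hb
  have kleinPD : ∀ X Y : Matrix (Fin m) (Fin m) ℝ, (hX : X.PosDef) → (hY : Y.PosDef) →
      (matFun f Y).trace ≤ (matFun f X).trace + (matFun (deriv f) X * (Y - X)).trace :=
    fun X Y hX hY => klein f hX.1 hY.1
      (fun i j => htan _ _ (hX.eigenvalues_pos i) (hY.eigenvalues_pos j))
  have mono : ∀ X Y : Matrix (Fin m) (Fin m) ℝ, X.PosDef → Y.PosDef → (Y - X).PosSemidef →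
      (matFun (deriv f) Y * Δ).trace ≤ (matFun (deriv f) X * Δ).trace := by
    intro X Y hX hY hYX
    have h := hf'_anti m X Y hX hY hYX
    have h2 := psd_trace_mul_nonneg h hΔ
    rw [Matrix.sub_mul, Matrix.trace_sub] at h2
    linarith
  have hApd : ∀ t : ℝ, 0 ≤ t → (A + t • Δ).PosDef :=
    fun t ht => hA.add_posSemidef (psd_smul hΔ ht)
  have hBpd : ∀ t : ℝ, 0 ≤ t → (B + t • Δ).PosDef :=
    fun t ht => hB.add_posSemidef (psd_smul hΔ ht)
  set K : ℝ := (matFun (deriv f) A * Δ).trace - (matFun (deriv f) (A + Δ) * Δ).trace with hK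
  set L : ℝ := ((matFun f (B + Δ)).trace + (matFun f A).trace)
      - ((matFun f (A + Δ)).trace + (matFun f B).trace) with hL
  have key : ∀ n : ℕ, 0 < n → L ≤ K / n := by
    intro n hn
    have hn' : (0:ℝ) < n := Nat.cast_pos.mpr hn
    set u : ℕ → ℝ := fun k => (matFun f (B + ((k:ℝ)/n) • Δ)).trace with hu
    set v : ℕ → ℝ := fun k => (matFun f (A + ((k:ℝ)/n) • Δ)).trace with hv
    set c : ℕ → ℝ := fun k => (matFun (deriv f) (A + ((k:ℝ)/n) • Δ) * Δ).trace with hc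
    have hdivnn : ∀ k : ℕ, (0:ℝ) ≤ (k:ℝ)/n := fun k => by positivity
    have claim1 : ∀ k : ℕ, u (k + 1) - u k ≤ (1/(n:ℝ)) * c k := by
      intro k
      have h1 := kleinPD (B + ((k:ℝ)/n) • Δ) (B + (((k:ℝ)+1)/n) • Δ)
        (hBpd _ (hdivnn k)) (hBpd _ (by positivity))
      have hdiff : (B + (((k:ℝ)+1)/n) • Δ) - (B + ((k:ℝ)/n) • Δ) = (1/(n:ℝ)) • Δ := by
        rw [add_sub_add_left_eq_sub, ← sub_smul]
        congr 1
        field_simp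
        ring
      rw [hdiff] at h1
      have h2 : (matFun (deriv f) (B + ((k:ℝ)/n) • Δ) * ((1/(n:ℝ)) • Δ)).trace
          = (1/(n:ℝ)) * (matFun (deriv f) (B + ((k:ℝ)/n) • Δ) * Δ).trace := by
        rw [Matrix.mul_smul, Matrix.trace_smul, smul_eq_mul]
      rw [h2] at h1
      have h3 : (matFun (deriv f) (B + ((k:ℝ)/n) • Δ) * Δ).trace ≤ c k := by
        apply mono _ _ (hApd _ (hdivnn k)) (hBpd _ (hdivnn k))
        rw [add_sub_add_right_eq_sub]
        exact hBA
      have hcast : ((k+1 : ℕ):ℝ) = (k:ℝ) + 1 := by push_cast; ring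
      have hu1 : u (k+1) = (matFun f (B + (((k:ℝ)+1)/n) • Δ)).trace := by
        simp only [hu, Nat.cast_add, Nat.cast_one]
      rw [hu1]
      have : (0:ℝ) ≤ 1/n := by positivity
      nlinarith [mul_le_mul_of_nonneg_left h3 this]
    have claim2 : ∀ k : ℕ, (1/(n:ℝ)) * c (k+1) ≤ v (k + 1) - v k := by
      intro k
      have h1 := kleinPD (A + (((k:ℝ)+1)/n) • Δ) (A + ((k:ℝ)/n) • Δ)
        (hApd _ (by positivity)) (hApd _ (hdivnn k))
      have hdiff : (A + ((k:ℝ)/n) • Δ) - (A + (((k:ℝ)+1)/n) • Δ) = (-(1/(n:ℝ))) • Δ := by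
        rw [add_sub_add_left_eq_sub, ← sub_smul]
        congr 1
        field_simp
        ring
      rw [hdiff] at h1
      have h2 : (matFun (deriv f) (A + (((k:ℝ)+1)/n) • Δ) * ((-(1/(n:ℝ))) • Δ)).trace
          = -((1/(n:ℝ)) * (matFun (deriv f) (A + (((k:ℝ)+1)/n) • Δ) * Δ).trace) := by
        rw [Matrix.mul_smul, Matrix.trace_smul, smul_eq_mul]; ring
      rw [h2] at h1
      have hcast : ((k+1 : ℕ):ℝ) = (k:ℝ) + 1 := by push_cast; ring
      have hv1 : v (k+1) = (matFun f (A + (((k:ℝ)+1)/n) • Δ)).trace := by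
        simp only [hv, Nat.cast_add, Nat.cast_one]
      have hc1 : c (k+1) = (matFun (deriv f) (A + (((k:ℝ)+1)/n) • Δ) * Δ).trace := by
        simp only [hc, Nat.cast_add, Nat.cast_one]
      rw [hv1, hc1]
      linarith
    have tele_u : u n - u 0 ≤ ∑ k ∈ Finset.range n, (1/(n:ℝ)) * c k := by
      rw [← Finset.sum_range_sub u]
      exact Finset.sum_le_sum fun k _ => claim1 k
    have tele_v : ∑ k ∈ Finset.range n, (1/(n:ℝ)) * c (k+1) ≤ v n - v 0 := by
      rw [← Finset.sum_range_sub v]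
      exact Finset.sum_le_sum fun k _ => claim2 k
    have tele_c : ∑ k ∈ Finset.range n, ((1/(n:ℝ)) * c k - (1/(n:ℝ)) * c (k+1))
        = (1/(n:ℝ)) * (c 0 - c n) := by
      have := Finset.sum_range_sub' (fun k => (1/n : ℝ) * c k) n
      rw [this]; ring
    have hsum : (u n - u 0) - (v n - v 0) ≤ (1/(n:ℝ)) * (c 0 - c n) := by
      rw [← tele_c, Finset.sum_sub_distrib]
      linarith
    -- identify endpoints
    have hnn : ((n:ℝ))/n = 1 := div_self (ne_of_gt hn')
    have hu0 : u 0 = (matFun f B).trace := by simp [hu]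
    have hun : u n = (matFun f (B + Δ)).trace := by
      simp only [hu]; rw [hnn, one_smul]
    have hv0 : v 0 = (matFun f A).trace := by simp [hv]
    have hvn : v n = (matFun f (A + Δ)).trace := by
      simp only [hv]; rw [hnn, one_smul]
    have hc0 : c 0 = (matFun (deriv f) A * Δ).trace := by simp [hc]
    have hcn : c n = (matFun (deriv f) (A + Δ) * Δ).trace := by
      simp only [hc]; rw [hnn, one_smul]
    rw [hu0, hun, hv0, hvn, hc0, hcn] at hsum
    rw [hL, hK]
    calc ((matFun f (B + Δ)).trace + (matFun f A).trace)
        - ((matFun f (A + Δ)).trace + (matFun f B).trace)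
        ≤ (1/(n:ℝ)) * ((matFun (deriv f) A * Δ).trace
          - (matFun (deriv f) (A + Δ) * Δ).trace) := by linarith
      _ = ((matFun (deriv f) A * Δ).trace - (matFun (deriv f) (A + Δ) * Δ).trace) / n := by
          ring
  have hlim : Filter.Tendsto (fun n : ℕ => K / n) Filter.atTop (nhds 0) :=
    tendsto_const_div_atTop_nhds_zero_nat K
  have hL0 : L ≤ 0 := by
    refine ge_of_tendsto hlim ?_
    filter_upwards [Filter.eventually_gt_atTop 0] with n hn
    exact key n hn
  rw [hL] at hL0
  linarith

lemma smul_one_posDef {m : ℕ} {ε : ℝ} (hε : 0 < ε) :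
    (ε • (1 : Matrix (Fin m) (Fin m) ℝ)).PosDef := by
  rw [Matrix.smul_one_eq_diagonal]
  exact Matrix.posDef_diagonal_iff.mpr fun _ => hε

lemma tendsto_trace_matFun {m : ℕ} (f : ℝ → ℝ)
    (hf_cont : ContinuousOn f (Set.Ici (0 : ℝ)))
    {X : Matrix (Fin m) (Fin m) ℝ} (hX : X.PosSemidef) :
    Filter.Tendsto (fun ε : ℝ => (matFun f (X + ε • 1)).trace)
      (nhdsWithin 0 (Set.Ioi 0)) (nhds ((matFun f X).trace)) := by
  have hherm : ∀ ε : ℝ, (X + ε • (1 : Matrix (Fin m) (Fin m) ℝ)).IsHermitian := by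
    intro ε
    refine hX.1.add ?_
    unfold Matrix.IsHermitian
    rw [Matrix.conjTranspose_smul, Matrix.conjTranspose_one]
    simp
  have hfun : ∀ ε : ℝ, (matFun f (X + ε • 1)).trace
      = ∑ i, f (hX.1.eigenvalues i + ε) := by
    intro ε
    rw [trace_matFun f (hherm ε), sum_g_eig_shift hX.1 ε (hherm ε)]
  simp only [hfun]
  rw [show (matFun f X).trace = ∑ i, f (hX.1.eigenvalues i) from trace_matFun f hX.1]
  apply tendsto_finset_sum
  intro i _
  have hnn : (0:ℝ) ≤ hX.1.eigenvalues i := hX.eigenvalues_nonneg i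
  have hcw : ContinuousWithinAt f (Set.Ici 0) (hX.1.eigenvalues i) := hf_cont _ hnn
  have harg : Filter.Tendsto (fun ε : ℝ => hX.1.eigenvalues i + ε)
      (nhdsWithin 0 (Set.Ioi 0)) (nhdsWithin (hX.1.eigenvalues i) (Set.Ici 0)) := by
    apply tendsto_nhdsWithin_of_tendsto_nhds_of_eventually_within
    · have : Filter.Tendsto (fun ε : ℝ => hX.1.eigenvalues i + ε) (nhds 0)
          (nhds (hX.1.eigenvalues i + 0)) :=
        (continuous_const.add continuous_id).tendsto 0
      rw [add_zero] at this
      exact this.mono_left nhdsWithin_le_nhds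
    · filter_upwards [self_mem_nhdsWithin] with ε hε
      exact le_trans hnn (by linarith [Set.mem_Ioi.mp hε])
  exact hcw.tendsto.comp harg

/-- If `f` is continuous on `[0,∞)`, differentiable on `(0,∞)`,
with operator antitone derivative on `(0,∞)`, and `M₁,…,M_s` are positive
semidefinite, then `I ↦ trace f(∑_{i∈I} M_i)` is submodular. -/
theorem trace_matFun_sum_submodular (f : ℝ → ℝ)
    (hf_cont : ContinuousOn f (Set.Ici (0 : ℝ)))
    (hf_diff : DifferentiableOn ℝ f (Set.Ioi (0 : ℝ)))
    (hf'_anti : OperatorAntitoneOn (deriv f))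
    (m s : ℕ) (M : Fin s → Matrix (Fin m) (Fin m) ℝ)
    (hM : ∀ i, (M i).PosSemidef) (I J : Finset (Fin s)) :
    (matFun f (∑ i ∈ I ∪ J, M i)).trace + (matFun f (∑ i ∈ I ∩ J, M i)).trace ≤
      (matFun f (∑ i ∈ I, M i)).trace + (matFun f (∑ i ∈ J, M i)).trace := by
  classical
  have hsum : ∀ S : Finset (Fin s), (∑ i ∈ S, M i).PosSemidef := fun S =>
    Finset.sum_induction M _ (fun a b ha hb => ha.add hb) Matrix.PosSemidef.zero
      (fun i _ => hM i)
  set P := ∑ i ∈ I ∩ J, M i with hP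
  set Q := ∑ i ∈ J, M i with hQ
  set D := ∑ i ∈ I \ J, M i with hD
  set R := ∑ i ∈ J \ I, M i with hR
  have hIP : ∑ i ∈ I, M i = P + D := by
    rw [hP, hD, ← Finset.sum_union]
    · congr 1
      ext x; simp only [Finset.mem_union, Finset.mem_inter, Finset.mem_sdiff]; tauto
    · exact Finset.disjoint_left.mpr fun x hx hx2 =>
        (Finset.mem_sdiff.mp hx2).2 (Finset.mem_inter.mp hx).2
  have hUQ : ∑ i ∈ I ∪ J, M i = Q + D := by
    rw [hQ, hD, ← Finset.sum_union]
    · congr 1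
      ext x; simp only [Finset.mem_union, Finset.mem_sdiff]; tauto
    · exact Finset.disjoint_left.mpr fun x hx hx2 => (Finset.mem_sdiff.mp hx2).2 hx
  have hQP : Q = P + R := by
    rw [hP, hQ, hR, ← Finset.sum_union]
    · congr 1
      ext x; simp only [Finset.mem_union, Finset.mem_inter, Finset.mem_sdiff]; tauto
    · exact Finset.disjoint_left.mpr fun x hx hx2 =>
        (Finset.mem_sdiff.mp hx2).2 (Finset.mem_inter.mp hx).1
  rw [hIP, hUQ]
  have hQDpsd : (Q + D).PosSemidef := (hsum J).add (hsum (I \ J))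
  have hPDpsd : (P + D).PosSemidef := (hsum (I ∩ J)).add (hsum (I \ J))
  have hineq : ∀ ε : ℝ, ε ∈ Set.Ioi (0:ℝ) →
      (matFun f ((Q + D) + ε • 1)).trace + (matFun f (P + ε • 1)).trace
      ≤ (matFun f ((P + D) + ε • 1)).trace + (matFun f (Q + ε • 1)).trace := by
    intro ε hε
    have hε' : (0:ℝ) < ε := hε
    have hApd : (P + ε • (1 : Matrix (Fin m) (Fin m) ℝ)).PosDef :=
      Matrix.PosDef.posSemidef_add (hsum (I ∩ J)) (smul_one_posDef hε')
    have hBpd : (Q + ε • (1 : Matrix (Fin m) (Fin m) ℝ)).PosDef :=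
      Matrix.PosDef.posSemidef_add (hsum J) (smul_one_posDef hε')
    have hBA : ((Q + ε • (1 : Matrix (Fin m) (Fin m) ℝ)) - (P + ε • 1)).PosSemidef := by
      rw [add_sub_add_right_eq_sub, hQP, add_sub_cancel_left]
      exact hsum (J \ I)
    have h := main_pd f hf_diff hf'_anti hApd hBpd hBA (hsum (I \ J))
    have e1 : Q + ε • (1 : Matrix (Fin m) (Fin m) ℝ) + D = (Q + D) + ε • 1 := by abel
    have e2 : P + ε • (1 : Matrix (Fin m) (Fin m) ℝ) + D = (P + D) + ε • 1 := by abel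
    rwa [e1, e2] at h
  refine le_of_tendsto_of_tendsto
    ((tendsto_trace_matFun f hf_cont hQDpsd).add (tendsto_trace_matFun f hf_cont (hsum (I ∩ J))))
    ((tendsto_trace_matFun f hf_cont hPDpsd).add (tendsto_trace_matFun f hf_cont (hsum J)))
    ?_
  filter_upwards [self_mem_nhdsWithin] with ε hε
  exact hineq ε hε
end

section
/- Let M₁,…,M_s be m×m real symmetric positive semidefinite matrices. Then the set function I ↦ rank(Σ_{i∈I} M_i) on subsets of {1,…,s} is submodular: for all I, J ⊆ {1,…,s}, rank(Σ_{i∈I} M_i) + rank(Σ_{i∈J} M_i) ≥ rank(Σ_{i∈I∪J} M_i) + rank(Σ_{i∈I∩J} M_i). -/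
open Matrix

private lemma sum_mulVec' {m : ℕ} {ι : Type*} [DecidableEq ι] (I : Finset ι)
    (M : ι → Matrix (Fin m) (Fin m) ℝ) (x : Fin m → ℝ) :
    (∑ i ∈ I, M i) *ᵥ x = ∑ i ∈ I, M i *ᵥ x := by
  induction I using Finset.induction_on with
  | empty => simp
  | insert _ _ h ih => simp [Finset.sum_insert h, add_mulVec, ih]

private lemma dp_sum {m : ℕ} {ι : Type*} [DecidableEq ι] (I : Finset ι)
    (x : Fin m → ℝ) (v : ι → Fin m → ℝ) :
    ∑ i ∈ I, x ⬝ᵥ v i = x ⬝ᵥ ∑ i ∈ I, v i := by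
  induction I using Finset.induction_on with
  | empty => simp
  | insert _ _ h ih => simp [Finset.sum_insert h, dotProduct_add, ih]

private lemma ker_sum_eq (m s : ℕ) (M : Fin s → Matrix (Fin m) (Fin m) ℝ)
    (hM : ∀ i, (M i).PosSemidef) (I : Finset (Fin s)) :
    LinearMap.ker (∑ i ∈ I, M i).mulVecLin = ⨅ i ∈ I, LinearMap.ker (M i).mulVecLin := by
  apply le_antisymm
  · intro x hx
    simp only [LinearMap.mem_ker, mulVecLin_apply] at hx
    simp only [Submodule.mem_iInf, LinearMap.mem_ker, mulVecLin_apply]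
    intro i hi
    rw [← (hM i).dotProduct_mulVec_zero_iff]
    have hsum : ∑ i ∈ I, star x ⬝ᵥ (M i) *ᵥ x = 0 := by
      rw [dp_sum, ← sum_mulVec', hx, dotProduct_zero]
    have hnn : ∀ i ∈ I, 0 ≤ star x ⬝ᵥ (M i) *ᵥ x := fun i _ => (hM i).dotProduct_mulVec_nonneg x
    exact (Finset.sum_eq_zero_iff_of_nonneg hnn).mp hsum i hi
  · intro x hx
    simp only [Submodule.mem_iInf, LinearMap.mem_ker, mulVecLin_apply] at hx
    simp only [LinearMap.mem_ker, mulVecLin_apply]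
    rw [sum_mulVec']
    exact Finset.sum_eq_zero fun i hi => hx i hi

private lemma rank_add_ker (m s : ℕ) (M : Fin s → Matrix (Fin m) (Fin m) ℝ)
    (I : Finset (Fin s)) :
    (∑ i ∈ I, M i).rank
      + Module.finrank ℝ (LinearMap.ker (∑ i ∈ I, M i).mulVecLin) = m := by
  rw [Matrix.rank]
  rw [LinearMap.finrank_range_add_finrank_ker]
  simp

/-- For positive semidefinite matrices `M₁,…,M_s`, the set
function `I ↦ rank (∑_{i∈I} M_i)` is submodular. -/
theorem rank_sum_submodular (m s : ℕ) (M : Fin s → Matrix (Fin m) (Fin m) ℝ)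
    (hM : ∀ i, (M i).PosSemidef) (I J : Finset (Fin s)) :
    (∑ i ∈ I ∪ J, M i).rank + (∑ i ∈ I ∩ J, M i).rank ≤
      (∑ i ∈ I, M i).rank + (∑ i ∈ J, M i).rank := by
  set KI := ⨅ i ∈ I, LinearMap.ker (M i).mulVecLin with hKI
  set KJ := ⨅ i ∈ J, LinearMap.ker (M i).mulVecLin with hKJ
  have hU : LinearMap.ker (∑ i ∈ I ∪ J, M i).mulVecLin = KI ⊓ KJ := by
    rw [ker_sum_eq m s M hM, hKI, hKJ]
    simp [iInf_or, iInf_inf_eq]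
  have hInt : KI ⊔ KJ ≤ LinearMap.ker (∑ i ∈ I ∩ J, M i).mulVecLin := by
    rw [ker_sum_eq m s M hM]
    apply sup_le
    · exact le_iInf₂ fun i hi => biInf_le _ (Finset.mem_inter.mp hi).1
    · exact le_iInf₂ fun i hi => biInf_le _ (Finset.mem_inter.mp hi).2
  have h1 := rank_add_ker m s M I
  have h2 := rank_add_ker m s M J
  have h3 := rank_add_ker m s M (I ∪ J)
  have h4 := rank_add_ker m s M (I ∩ J)
  rw [ker_sum_eq m s M hM, ← hKI] at h1
  rw [ker_sum_eq m s M hM, ← hKJ] at h2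
  rw [hU] at h3
  have hdim := Submodule.finrank_sup_add_finrank_inf_eq KI KJ
  have hmono : Module.finrank ℝ ↥(KI ⊔ KJ)
      ≤ Module.finrank ℝ ↥(LinearMap.ker (∑ i ∈ I ∩ J, M i).mulVecLin) :=
    Submodule.finrank_mono hInt
  omega
end

section
/- Let M₁,…,M_s be m×m real symmetric positive definite matrices. Then for all I, J ⊆ {1,…,s} with I ∩ J ≠ ∅, one has det(Σ_{i∈I} M_i) · det(Σ_{i∈J} M_i) ≥ det(Σ_{i∈I∪J} M_i) · det(Σ_{i∈I∩J} M_i); equivalently, the set function I ↦ log det(Σ_{i∈I} M_i) is submodular on nonempty intersecting subsets of {1,…,s}. -/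
open Matrix

variable {n : Type*} [Fintype n] [DecidableEq n]

namespace Matrix.PosSemidef
open scoped MatrixOrder

noncomputable def sqrt {A : Matrix n n ℝ} (_ : A.PosSemidef) : Matrix n n ℝ := CFC.sqrt A

lemma posSemidef_sqrt {A : Matrix n n ℝ} (hA : A.PosSemidef) : hA.sqrt.PosSemidef :=
  (CFC.sqrt_nonneg A).posSemidef

lemma sqrt_mul_self {A : Matrix n n ℝ} (hA : A.PosSemidef) : hA.sqrt * hA.sqrt = A :=
  CFC.sqrt_mul_sqrt_self A hA.nonneg

end Matrix.PosSemidef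

lemma aux_one_le_det_one_add {S : Matrix n n ℝ} (hS : S.PosSemidef) :
    1 ≤ (1 + S).det := by
  have hH := hS.isHermitian
  have hspec := hH.spectral_theorem
  rw [Unitary.conjStarAlgAut_apply] at hspec
  set U : Matrix n n ℝ := (hH.eigenvectorUnitary : Matrix n n ℝ) with hUdef
  have hU : U * star U = 1 := (Matrix.mem_unitaryGroup_iff).mp hH.eigenvectorUnitary.2
  have hU' : star U * U = 1 := (Matrix.mem_unitaryGroup_iff').mp hH.eigenvectorUnitary.2
  have h1 : (1 : Matrix n n ℝ) + S
      = U * (1 + diagonal (RCLike.ofReal ∘ hH.eigenvalues)) * star U := by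
    rw [Matrix.mul_add, Matrix.add_mul, Matrix.mul_one, hU, ← hspec]
  rw [h1, det_mul, det_mul, mul_comm, ← mul_assoc, ← det_mul, hU', det_one, one_mul]
  have : (1 : Matrix n n ℝ) + diagonal (RCLike.ofReal ∘ hH.eigenvalues)
      = diagonal (fun i => 1 + hH.eigenvalues i) := by
    rw [← diagonal_one, diagonal_add]
    rfl
  rw [this, det_diagonal]
  calc (1:ℝ) = ∏ _i : n, 1 := by simp
    _ ≤ ∏ i : n, (1 + hH.eigenvalues i) := Finset.prod_le_prod (fun i _ => zero_le_one) (fun i _ => by linarith [hS.eigenvalues_nonneg i])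

/-- det X ≤ det (X + D) for X PD, D PSD. -/
lemma aux_det_le_det_add {X D : Matrix n n ℝ} (hX : X.PosDef) (hD : D.PosSemidef) :
    X.det ≤ (X + D).det := by
  have hXinv : (X⁻¹).PosDef := hX.inv
  have hsq := hD.posSemidef_sqrt
  have hsqH : hD.sqrtᴴ = hD.sqrt := hsq.isHermitian.eq
  have hXD : X + D = X * (1 + X⁻¹ * D) := by
    rw [Matrix.mul_add, Matrix.mul_one, ← Matrix.mul_assoc,
      Matrix.mul_nonsing_inv _ hX.det_pos.ne'.isUnit, Matrix.one_mul]
  have key : (1 + X⁻¹ * D).det = (1 + hD.sqrt * X⁻¹ * hD.sqrt).det := by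
    conv_lhs => rw [← hD.sqrt_mul_self, ← Matrix.mul_assoc]
    rw [Matrix.det_one_add_mul_comm, Matrix.mul_assoc]
  have hpsd : (hD.sqrt * X⁻¹ * hD.sqrt).PosSemidef := by
    have := hXinv.posSemidef.mul_mul_conjTranspose_same hD.sqrt
    rwa [hsqH] at this
  calc X.det = X.det * 1 := (mul_one _).symm
    _ ≤ X.det * (1 + X⁻¹ * D).det := by
        rw [key]; exact mul_le_mul_of_nonneg_left (aux_one_le_det_one_add hpsd) hX.det_pos.le
    _ = (X + D).det := by rw [hXD, det_mul]

/-- Core: det(1+P+Q) ≤ det(1+P) det(1+Q) for P, Q PSD. -/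
lemma aux_core {P Q : Matrix n n ℝ} (hP : P.PosSemidef) (hQ : Q.PosSemidef) :
    (1 + P + Q).det ≤ (1 + P).det * (1 + Q).det := by
  have h1P : (1 + P).PosDef := Matrix.PosDef.one.add_posSemidef hP
  have hR : ((1 + P)⁻¹).PosDef := h1P.inv
  set R := (1 + P)⁻¹ with hRdef
  have hRH : Rᴴ = R := hR.isHermitian.eq
  have hinv : R * (1 + P) = 1 := Matrix.nonsing_inv_mul _ h1P.det_pos.ne'.isUnit
  have hinv' : (1 + P) * R = 1 := Matrix.mul_nonsing_inv _ h1P.det_pos.ne'.isUnit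
  -- 1 - R = R * P is PSD
  have h1mR : (1 : Matrix n n ℝ) - R = R * (P + P * P) * Rᴴ := by
    rw [hRH]
    have : P + P * P = P * (1 + P) := by noncomm_ring
    rw [this, Matrix.mul_assoc, Matrix.mul_assoc, hinv', Matrix.mul_one]
    have := hinv
    rw [Matrix.mul_add, Matrix.mul_one] at this
    linear_combination (norm := abel) this.symm
  have hPP : (P + P * P).PosSemidef := by
    have h2 : (P * P).PosSemidef := by
      have := Matrix.posSemidef_conjTranspose_mul_self P
      rwa [hP.isHermitian.eq] at this
    exact hP.add h2
  have h1mRpsd : ((1 : Matrix n n ℝ) - R).PosSemidef := h1mR ▸ hPP.mul_mul_conjTranspose_same R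
  -- sqrt of Q
  have hsq := hQ.posSemidef_sqrt
  have hsqH : hQ.sqrtᴴ = hQ.sqrt := hsq.isHermitian.eq
  set T := hQ.sqrt with hT
  have hTT : T * T = Q := hQ.sqrt_mul_self
  -- 1 + P + Q = (1+P)(1 + R*Q)
  have hfact : 1 + P + Q = (1 + P) * (1 + R * Q) := by
    rw [Matrix.mul_add, Matrix.mul_one, ← Matrix.mul_assoc, hinv', Matrix.one_mul]
  have hdet1 : (1 + R * Q).det = (1 + T * R * T).det := by
    conv_lhs => rw [← hTT, ← Matrix.mul_assoc]
    rw [Matrix.det_one_add_mul_comm, Matrix.mul_assoc, ← Matrix.mul_assoc]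
  have hTRT : (T * R * T).PosSemidef := by
    have := hR.posSemidef.mul_mul_conjTranspose_same T
    rwa [hsqH] at this
  have hmono : (1 + T * R * T).det ≤ (1 + Q).det := by
    have hdiff : (T * (1 - R) * Tᴴ).PosSemidef := h1mRpsd.mul_mul_conjTranspose_same T
    have heq : 1 + Q = (1 + T * R * T) + T * (1 - R) * Tᴴ := by
      rw [hsqH]
      have : T * (1 - R) * T = T * T - T * R * T := by noncomm_ring
      rw [this, ← hTT]
      abel
    rw [heq]
    exact aux_det_le_det_add (Matrix.PosDef.one.add_posSemidef hTRT) hdiff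
  calc (1 + P + Q).det = (1 + P).det * (1 + T * R * T).det := by
        rw [hfact, det_mul, hdet1]
    _ ≤ (1 + P).det * (1 + Q).det :=
        mul_le_mul_of_nonneg_left hmono h1P.det_pos.le

/-- Main matrix lemma. -/
lemma aux_main {A B C : Matrix n n ℝ} (hA : A.PosDef) (hB : B.PosSemidef)
    (hC : C.PosSemidef) : (A + B + C).det * A.det ≤ (A + B).det * (A + C).det := by
  set S := hA.posSemidef.sqrt with hSdef
  have hS := hA.posSemidef.posSemidef_sqrt
  have hSS : S * S = A := hA.posSemidef.sqrt_mul_self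
  have hdetS : S.det * S.det = A.det := by rw [← det_mul, hSS]
  have hSdet : IsUnit S.det := by
    have : S.det ≠ 0 := fun h => by
      have := hA.det_pos; rw [← hdetS, h, mul_zero] at this; exact lt_irrefl _ this
    exact this.isUnit
  set T := S⁻¹ with hTdef
  have hTS : T * S = 1 := Matrix.nonsing_inv_mul _ hSdet
  have hST : S * T = 1 := Matrix.mul_nonsing_inv _ hSdet
  have hTH : Tᴴ = T := by
    rw [hTdef, Matrix.conjTranspose_nonsing_inv, hS.isHermitian.eq]
  have conj : ∀ X : Matrix n n ℝ, S * (T * X * T) * S = X := fun X => by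
    calc S * (T * X * T) * S = (S * T) * X * (T * S) := by noncomm_ring
      _ = X := by rw [hST, hTS, Matrix.one_mul, Matrix.mul_one]
  set P := T * B * T with hPdef
  set Q := T * C * T with hQdef
  have hP : P.PosSemidef := by have := hB.mul_mul_conjTranspose_same T; rwa [hTH] at this
  have hQ : Q.PosSemidef := by have := hC.mul_mul_conjTranspose_same T; rwa [hTH] at this
  have hAB : A + B = S * (1 + P) * S := by
    rw [Matrix.mul_add, Matrix.add_mul, Matrix.mul_one, hSS, conj]
  have hAC : A + C = S * (1 + Q) * S := by
    rw [Matrix.mul_add, Matrix.add_mul, Matrix.mul_one, hSS, conj]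
  have hABC : A + B + C = S * (1 + P + Q) * S := by
    rw [Matrix.mul_add, Matrix.add_mul, ← hAB, conj]
  have e1 : (A + B).det = A.det * (1 + P).det := by
    rw [hAB, det_mul, det_mul, ← hdetS]; ring
  have e2 : (A + C).det = A.det * (1 + Q).det := by
    rw [hAC, det_mul, det_mul, ← hdetS]; ring
  have e3 : (A + B + C).det = A.det * (1 + P + Q).det := by
    rw [hABC, det_mul, det_mul, ← hdetS]; ring
  rw [e1, e2, e3]
  have := aux_core hP hQ
  calc A.det * (1 + P + Q).det * A.det
      = A.det * A.det * (1 + P + Q).det := by ring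
    _ ≤ A.det * A.det * ((1 + P).det * (1 + Q).det) := by
        exact mul_le_mul_of_nonneg_left this (mul_nonneg hA.det_pos.le hA.det_pos.le)
    _ = A.det * (1 + P).det * (A.det * (1 + Q).det) := by ring

omit [DecidableEq n] in
lemma aux_sum_psd {s : ℕ} (M : Fin s → Matrix n n ℝ) (hM : ∀ i, (M i).PosDef)
    (K : Finset (Fin s)) : (∑ i ∈ K, M i).PosSemidef :=
  Finset.sum_induction M _ (fun _ _ ha hb => ha.add hb) Matrix.PosSemidef.zero
    (fun i _ => (hM i).posSemidef)


/-- For positive definite matrices `M₁,…,M_s` and intersecting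
subsets `I`, `J`, one has
`det(∑_{I∪J} M_i) ⬝ det(∑_{I∩J} M_i) ≤ det(∑_I M_i) ⬝ det(∑_J M_i)`;
equivalently `I ↦ log det (∑_{i∈I} M_i)` is submodular on such subsets. -/
theorem det_sum_submodular (m s : ℕ) (M : Fin s → Matrix (Fin m) (Fin m) ℝ)
    (hM : ∀ i, (M i).PosDef) (I J : Finset (Fin s)) (hIJ : (I ∩ J).Nonempty) :
    (∑ i ∈ I ∪ J, M i).det * (∑ i ∈ I ∩ J, M i).det ≤
        (∑ i ∈ I, M i).det * (∑ i ∈ J, M i).det ∧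
      Real.log (∑ i ∈ I ∪ J, M i).det + Real.log (∑ i ∈ I ∩ J, M i).det ≤
        Real.log (∑ i ∈ I, M i).det + Real.log (∑ i ∈ J, M i).det := by
  set A := ∑ i ∈ I ∩ J, M i with hAdef
  set B := ∑ i ∈ I \ J, M i with hBdef
  set C := ∑ i ∈ J \ I, M i with hCdef
  have hA : A.PosDef := by
    obtain ⟨i0, hi0⟩ := hIJ
    have := Finset.add_sum_erase (I ∩ J) M hi0
    rw [hAdef, ← this]
    exact (hM i0).add_posSemidef (aux_sum_psd M hM _)
  have hB : B.PosSemidef := aux_sum_psd M hM _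
  have hC : C.PosSemidef := aux_sum_psd M hM _
  have hI : ∑ i ∈ I, M i = A + B := by
    rw [hAdef, hBdef, ← Finset.sdiff_inter_self_left I J, add_comm,
      Finset.sum_sdiff Finset.inter_subset_left]
  have hJ : ∑ i ∈ J, M i = A + C := by
    rw [hAdef, hCdef, ← Finset.sdiff_inter_self_left J I, add_comm,
      Finset.inter_comm I J, Finset.sum_sdiff Finset.inter_subset_left]
  have hU : ∑ i ∈ I ∪ J, M i = A + B + C := by
    rw [hCdef, ← hI, ← Finset.union_sdiff_left I J, add_comm,
      Finset.sum_sdiff Finset.subset_union_left]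
  have key : (A + B + C).det * A.det ≤ (A + B).det * (A + C).det :=
    aux_main hA hB hC
  have h1 : (∑ i ∈ I ∪ J, M i).det * (∑ i ∈ I ∩ J, M i).det ≤
      (∑ i ∈ I, M i).det * (∑ i ∈ J, M i).det := by
    rw [hU, hI, hJ]; exact key
  refine ⟨h1, ?_⟩
  have pU : 0 < (∑ i ∈ I ∪ J, M i).det := by
    rw [hU]; exact ((hA.add_posSemidef hB).add_posSemidef hC).det_pos
  have pA : 0 < (∑ i ∈ I ∩ J, M i).det := hA.det_pos
  have pI : 0 < (∑ i ∈ I, M i).det := by rw [hI]; exact (hA.add_posSemidef hB).det_pos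
  have pJ : 0 < (∑ i ∈ J, M i).det := by rw [hJ]; exact (hA.add_posSemidef hC).det_pos
  have := Real.log_le_log (mul_pos pU pA) h1
  rwa [Real.log_mul pU.ne' pA.ne', Real.log_mul pI.ne' pJ.ne'] at this
end

section
/- Let f : ℝ → ℝ be continuously differentiable on (0,∞), let M be an m×m real symmetric positive definite matrix, and suppose the map X ↦ f(X) (applying f to symmetric matrices via the spectral decomposition) is Fréchet differentiable at M on the space of m×m real symmetric matrices, with derivative D. Then for all m×m real symmetric matrices A and B, trace(A · D(B)) = trace(B · D(A)). -/
attribute [local instance] Matrix.normedAddCommGroup Matrix.normedSpace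

namespace MFA

open Matrix Polynomial Asymptotics Filter

variable {m : ℕ}

local notation "e" => fun (i j : Fin m) => Matrix.single i j (1:ℝ)

lemma star_e (i j : Fin m) : star (e i j) = e j i := by
  ext a b
  simp [Matrix.star_apply, Matrix.single, and_comm]

lemma e_mul_diagonal (i j : Fin m) (d : Fin m → ℝ) :
    e i j * Matrix.diagonal d = d j • e i j := by
  ext a b
  simp only [Matrix.mul_diagonal, Matrix.smul_apply, Matrix.single, Matrix.of_apply,
    smul_eq_mul]
  by_cases h : i = a ∧ j = b
  · simp [h.1, h.2, mul_comm]
  · simp [h]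

lemma diagonal_mul_e (i j : Fin m) (d : Fin m → ℝ) :
    Matrix.diagonal d * e i j = d i • e i j := by
  ext a b
  simp only [Matrix.diagonal_mul, Matrix.smul_apply, Matrix.single, Matrix.of_apply,
    smul_eq_mul]
  by_cases h : i = a ∧ j = b
  · simp [h.1, h.2, mul_comm]
  · simp [h]

lemma e_mul_e (i j k : Fin m) : e i j * e j k = e i k := by
  simpa using Matrix.StdBasisMatrix.mul_same (i := i) (j := j) k (1:ℝ) (b := 1)

lemma e_mul_e_ne (i j k l : Fin m) (h : j ≠ k) : e i j * e k l = 0 := by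
  exact Matrix.single_mul_single_of_ne (1:ℝ) i j k h (1:ℝ)

lemma trace_mul_e (X : Matrix (Fin m) (Fin m) ℝ) (i j : Fin m) :
    (X * e i j).trace = X j i := by
  simp [Matrix.trace, Matrix.diag, Matrix.mul_apply, Matrix.single, ite_and]

/-- Givens rotation in the (p,q) plane. -/
noncomputable def rotG (c s : ℝ) (p q : Fin m) : Matrix (Fin m) (Fin m) ℝ :=
  1 + (c - 1) • (e p p + e q q) + s • (e p q - e q p)

lemma star_rotG (c s : ℝ) (p q : Fin m) : star (rotG c s p q) = rotG c (-s) p q := by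
  simp only [rotG, star_add, star_smul, star_sub, star_one, star_e, star_trivial]
  module

lemma rotG_mul_diag_mul_star {p q : Fin m} (hpq : p ≠ q) (c s : ℝ) (hcs : c^2 + s^2 = 1)
    (d : Fin m → ℝ) :
    rotG c s p q * Matrix.diagonal d * star (rotG c s p q) =
      Matrix.diagonal d + (s^2 * (d q - d p)) • e p p + (s^2 * (d p - d q)) • e q q
        + (c * s * (d q - d p)) • (e p q + e q p) := by
  have hqp : q ≠ p := hpq.symm
  rw [star_rotG]
  simp only [rotG, add_mul, mul_add, one_mul, mul_one, smul_mul_assoc, mul_smul_comm,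
    sub_mul, mul_sub, e_mul_diagonal, diagonal_mul_e, e_mul_e,
    e_mul_e_ne p p q q hpq, e_mul_e_ne p p q p hpq,
    e_mul_e_ne q q p p hqp, e_mul_e_ne q q p q hqp,
    e_mul_e_ne p q p p hqp, e_mul_e_ne p q p q hqp,
    e_mul_e_ne q p q q hpq, e_mul_e_ne q p q p hpq,
    smul_smul]
  match_scalars <;>
    first
      | ring1
      | linear_combination (d p) * hcs
      | linear_combination (d q) * hcs
      | linear_combination (d p - d q) * hcs
      | linear_combination (d q - d p) * hcs

lemma rotG_mem (p q : Fin m) (hpq : p ≠ q) (c s : ℝ) (hcs : c^2 + s^2 = 1) :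
    rotG c s p q ∈ Matrix.unitaryGroup (Fin m) ℝ := by
  rw [Matrix.mem_unitaryGroup_iff]
  have h := rotG_mul_diag_mul_star hpq c s hcs (fun _ => (1:ℝ))
  simpa [Matrix.diagonal_one, mul_one] using h

lemma aeval_conj_diag {V : Matrix (Fin m) (Fin m) ℝ}
    (hV : V ∈ Matrix.unitaryGroup (Fin m) ℝ) (d : Fin m → ℝ) (P : Polynomial ℝ) :
    aeval (V * Matrix.diagonal d * star V) P
      = V * Matrix.diagonal (fun i => P.eval (d i)) * star V := by
  have hV1 : V * star V = 1 := Matrix.mem_unitaryGroup_iff.mp hV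
  have hV2 : star V * V = 1 := Matrix.mem_unitaryGroup_iff'.mp hV
  have hpow : ∀ k : ℕ, (V * Matrix.diagonal d * star V) ^ k
      = V * Matrix.diagonal (fun i => d i ^ k) * star V := by
    intro k
    induction k with
    | zero => simp [pow_zero, Matrix.diagonal_one, hV1]
    | succ k ih =>
      rw [pow_succ, ih]
      have hassoc : V * Matrix.diagonal (fun i => d i ^ k) * star V
            * (V * Matrix.diagonal d * star V)
          = V * (Matrix.diagonal (fun i => d i ^ k)
            * ((star V * V) * (Matrix.diagonal d * star V))) := by
        noncomm_ring
      rw [hassoc, hV2, one_mul]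
      rw [show V * (Matrix.diagonal (fun i => d i ^ k) * (Matrix.diagonal d * star V))
          = V * (Matrix.diagonal (fun i => d i ^ k) * Matrix.diagonal d) * star V by
        noncomm_ring]
      rw [Matrix.diagonal_mul_diagonal]
      simp [pow_succ]
  induction P using Polynomial.induction_on' with
  | add p q hp hq =>
    simp only [map_add, hp, hq, Polynomial.eval_add]
    rw [show (Matrix.diagonal fun i => p.eval (d i) + q.eval (d i))
      = Matrix.diagonal (fun i => p.eval (d i)) + Matrix.diagonal (fun i => q.eval (d i)) by
        ext i j; rcases eq_or_ne i j with h|h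
        · simp [h]
        · simp [Matrix.diagonal_apply_ne _ h, h]]
    noncomm_ring
  | monomial n a =>
    rw [Polynomial.aeval_monomial, hpow]
    simp only [Polynomial.eval_monomial]
    rw [show (Matrix.diagonal fun i => a * d i ^ n) = a • Matrix.diagonal (fun i => d i ^ n) by
      ext i j; rcases eq_or_ne i j with h|h
      · simp [h]
      · simp [Matrix.diagonal_apply_ne _ h, h]]
    rw [Algebra.algebraMap_eq_smul_one]
    simp [smul_mul_assoc, Matrix.mul_smul]

lemma matFun_eq (f : ℝ → ℝ) {A V : Matrix (Fin m) (Fin m) ℝ} {d : Fin m → ℝ}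
    (hV : V ∈ Matrix.unitaryGroup (Fin m) ℝ) (hA : A = V * Matrix.diagonal d * star V) :
    matFun f A = V * Matrix.diagonal (fun i => f (d i)) * star V := by
  have hAh : A.IsHermitian := by
    rw [hA, Matrix.star_eq_conjTranspose]
    exact Matrix.isHermitian_mul_mul_conjTranspose V (Matrix.isHermitian_diagonal d)
  rw [matFun, dif_pos hAh]
  set W := (hAh.eigenvectorUnitary : Matrix (Fin m) (Fin m) ℝ) with hW
  set μ := hAh.eigenvalues with hμ
  have hspec : A = W * Matrix.diagonal μ * star W := by
    have := hAh.spectral_theorem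
    simpa using this
  set s : Finset ℝ := Finset.image μ Finset.univ ∪ Finset.image d Finset.univ with hs
  set P := Lagrange.interpolate s id f with hP
  have hnode : ∀ x ∈ s, P.eval x = f x := fun x hx => by
    exact Lagrange.eval_interpolate_at_node f Function.injective_id.injOn hx
  have hWU : W ∈ Matrix.unitaryGroup (Fin m) ℝ := hAh.eigenvectorUnitary.2
  have h1 : aeval A P = W * Matrix.diagonal (fun i => P.eval (μ i)) * star W := by
    rw [hspec] at *; exact aeval_conj_diag hWU μ P
  have h2 : aeval A P = V * Matrix.diagonal (fun i => P.eval (d i)) * star V := by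
    rw [hA] at *; exact aeval_conj_diag hV d P
  have hμs : ∀ i, P.eval (μ i) = f (μ i) := fun i =>
    hnode _ (Finset.mem_union_left _ (Finset.mem_image_of_mem μ (Finset.mem_univ i)))
  have hds : ∀ i, P.eval (d i) = f (d i) := fun i =>
    hnode _ (Finset.mem_union_right _ (Finset.mem_image_of_mem d (Finset.mem_univ i)))
  calc W * Matrix.diagonal (fun i => f (μ i)) * star W
      = W * Matrix.diagonal (fun i => P.eval (μ i)) * star W := by simp_rw [hμs]
    _ = aeval A P := h1.symm
    _ = V * Matrix.diagonal (fun i => P.eval (d i)) * star V := h2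
    _ = V * Matrix.diagonal (fun i => f (d i)) * star V := by simp_rw [hds]

lemma deriv_transfer {f : ℝ → ℝ} {M : Matrix (Fin m) (Fin m) ℝ}
    (D : Matrix (Fin m) (Fin m) ℝ →L[ℝ] Matrix (Fin m) (Fin m) ℝ)
    (hD : (fun H : Matrix (Fin m) (Fin m) ℝ => matFun f (M + H) - matFun f M - D H)
      =o[nhdsWithin 0 {H : Matrix (Fin m) (Fin m) ℝ | H.IsHermitian}]
        (fun H : Matrix (Fin m) (Fin m) ℝ => H))
    {H : ℝ → Matrix (Fin m) (Fin m) ℝ} {B Y : Matrix (Fin m) (Fin m) ℝ}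
    (hherm : ∀ t, (H t).IsHermitian) (h0 : H 0 = 0)
    (hH : HasDerivAt H B 0)
    (hY : HasDerivAt (fun t => matFun f (M + H t)) Y 0) :
    D B = Y := by
  have htends : Tendsto H (nhds 0)
      (nhdsWithin 0 {X : Matrix (Fin m) (Fin m) ℝ | X.IsHermitian}) := by
    rw [tendsto_nhdsWithin_iff]
    constructor
    · have := hH.continuousAt.tendsto; rw [h0] at this; exact this
    · exact Filter.Eventually.of_forall hherm
  have h1 : (fun t => matFun f (M + H t) - matFun f M - D (H t)) =o[nhds 0] (fun t => H t) :=
    hD.comp_tendsto htends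
  have hHO : (fun t : ℝ => H t) =O[nhds (0:ℝ)] (fun t : ℝ => t) := by
    simpa [h0] using hH.isBigO_sub
  have h1' : (fun t => matFun f (M + H t) - matFun f M - D (H t)) =o[nhds (0:ℝ)]
      (fun t : ℝ => t) := h1.trans_isBigO hHO
  have h2 : (fun t : ℝ => H t - t • B) =o[nhds (0:ℝ)] (fun t : ℝ => t) := by
    simpa [h0] using hasDerivAt_iff_isLittleO.mp hH
  have h3 : (fun t : ℝ => D (H t) - t • D B) =o[nhds (0:ℝ)] (fun t : ℝ => t) := by
    have hb : (fun t : ℝ => D (H t - t • B)) =O[nhds (0:ℝ)] (fun t => H t - t • B) :=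
      D.isBigO_comp _ _
    have := hb.trans_isLittleO h2
    simpa [map_sub, _root_.map_smul] using this
  have h4 : (fun t : ℝ => matFun f (M + H t) - matFun f M - t • Y) =o[nhds (0:ℝ)]
      (fun t : ℝ => t) := by
    have := hasDerivAt_iff_isLittleO.mp hY
    simpa [h0] using this
  have h5 : (fun t : ℝ => t • (Y - D B)) =o[nhds (0:ℝ)] (fun t : ℝ => t) := by
    have h6 := (h1'.add h3).sub h4
    have heq : (fun t : ℝ => matFun f (M + H t) - matFun f M - D (H t)
        + (D (H t) - t • D B) - (matFun f (M + H t) - matFun f M - t • Y))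
        = (fun t : ℝ => t • (Y - D B)) := by
      funext t
      simp only [smul_sub]
      abel
    rwa [heq] at h6
  by_contra hne
  have hzne : Y - D B ≠ 0 := sub_ne_zero.mpr (fun h => hne h.symm)
  have hpos : 0 < ‖Y - D B‖ := norm_pos_iff.mpr hzne
  have hev := isLittleO_iff.mp h5 (half_pos hpos)
  obtain ⟨δ, hδ, hball⟩ := Metric.eventually_nhds_iff.mp hev
  have ht : dist (δ/2) (0:ℝ) < δ := by
    rw [Real.dist_eq, sub_zero, abs_of_pos (by linarith)]
    linarith
  have hb2 := hball ht
  rw [norm_smul, Real.norm_eq_abs] at hb2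
  have habs : |δ/2| > 0 := abs_pos.mpr (by positivity)
  have hc : ‖Y - D B‖ ≤ ‖Y - D B‖/2 := by
    have h' : |δ/2| * ‖Y - D B‖ ≤ ‖Y - D B‖ / 2 * |δ/2| := by
      simpa [Real.norm_eq_abs] using hb2
    nlinarith
  linarith


section cases

lemma herm_smul {X : Matrix (Fin m) (Fin m) ℝ} (hX : X.IsHermitian) (t : ℝ) :
    (t • X).IsHermitian := by
  rw [Matrix.IsHermitian, Matrix.conjTranspose_smul, hX]
  simp

lemma herm_conj (V : Matrix (Fin m) (Fin m) ℝ) {X : Matrix (Fin m) (Fin m) ℝ}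
    (hX : X.IsHermitian) : (V * X * star V).IsHermitian := by
  rw [Matrix.star_eq_conjTranspose]
  exact Matrix.isHermitian_mul_mul_conjTranspose V hX

lemma herm_e (p : Fin m) : (e p p).IsHermitian := by
  rw [Matrix.IsHermitian, ← Matrix.star_eq_conjTranspose, star_e]

lemma herm_epair (p q : Fin m) : (e p q + e q p).IsHermitian := by
  rw [Matrix.IsHermitian, ← Matrix.star_eq_conjTranspose, star_add, star_e, star_e, add_comm]

lemma diag_add_single (g : Fin m → ℝ) (p : Fin m) (c : ℝ) :
    Matrix.diagonal (fun i => g i + (if i = p then c else 0))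
      = Matrix.diagonal g + c • e p p := by
  ext i j
  rcases eq_or_ne i j with h | h
  · subst h
    by_cases hip : i = p
    · subst hip; simp [Matrix.single]
    · simp [Matrix.single, hip, Ne.symm hip]
  · have : ¬ (p = i ∧ p = j) := by rintro ⟨rfl, rfl⟩; exact h rfl
    simp [Matrix.diagonal_apply_ne _ h, Matrix.single, this]

lemma conj_add (V W X Y : Matrix (Fin m) (Fin m) ℝ) :
    V * (X + Y) * W = V * X * W + V * Y * W := by noncomm_ring

lemma conj_smul (V W X : Matrix (Fin m) (Fin m) ℝ) (t : ℝ) :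
    V * (t • X) * W = t • (V * X * W) := by
  rw [Matrix.mul_smul, Matrix.smul_mul]

variable {f : ℝ → ℝ} {M U : Matrix (Fin m) (Fin m) ℝ} {lam : Fin m → ℝ}

lemma caseI (hU : U ∈ Matrix.unitaryGroup (Fin m) ℝ)
    (hMspec : M = U * Matrix.diagonal lam * star U)
    (D : Matrix (Fin m) (Fin m) ℝ →L[ℝ] Matrix (Fin m) (Fin m) ℝ)
    (hD : (fun H : Matrix (Fin m) (Fin m) ℝ => matFun f (M + H) - matFun f M - D H)
      =o[nhdsWithin 0 {H : Matrix (Fin m) (Fin m) ℝ | H.IsHermitian}]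
        (fun H : Matrix (Fin m) (Fin m) ℝ => H))
    (p : Fin m) (hd : DifferentiableAt ℝ f (lam p)) :
    D (U * e p p * star U) = deriv f (lam p) • (U * e p p * star U) := by
  set Cpp := U * e p p * star U with hCpp
  have hCh : Cpp.IsHermitian := herm_conj U (herm_e p)
  have hXt : ∀ t : ℝ, M + t • Cpp
      = U * Matrix.diagonal (fun i => lam i + (if i = p then t else 0)) * star U := by
    intro t
    rw [diag_add_single lam p t, conj_add, ← hMspec, conj_smul]
  have hval : ∀ t : ℝ, matFun f (M + t • Cpp)
      = U * Matrix.diagonal (fun i => f (lam i)) * star U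
        + (f (lam p + t) - f (lam p)) • Cpp := by
    intro t
    rw [matFun_eq f hU (hXt t)]
    have hsplit : (fun i => f (lam i + (if i = p then t else 0)))
        = fun i => f (lam i) + (if i = p then f (lam p + t) - f (lam p) else 0) := by
      funext i
      by_cases hip : i = p
      · subst hip; simp
      · simp [hip]
    rw [hsplit, diag_add_single, conj_add, conj_smul]
  have hplus : HasDerivAt (fun t : ℝ => f (lam p + t)) (deriv f (lam p)) 0 := by
    have hin : HasDerivAt (fun t : ℝ => lam p + t) 1 0 := by
      simpa using (hasDerivAt_id (0:ℝ)).const_add (lam p)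
    have hout : HasDerivAt f (deriv f (lam p)) ((fun t : ℝ => lam p + t) 0) := by
      simpa using hd.hasDerivAt
    simpa [Function.comp_def] using hout.comp (0:ℝ) hin
  apply deriv_transfer D hD (fun t => herm_smul hCh t) (by simp)
    (by have := (hasDerivAt_id (0:ℝ)).smul_const Cpp; simp only [id, one_smul] at this; exact this)
  have hfun : (fun t : ℝ => matFun f (M + t • Cpp))
      = fun t : ℝ => U * Matrix.diagonal (fun i => f (lam i)) * star U
        + (f (lam p + t) - f (lam p)) • Cpp := funext hval
  rw [hfun]
  exact ((hplus.sub_const (f (lam p))).smul_const Cpp).const_add _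

lemma diag_split_two (F : Fin m → ℝ) {p q : Fin m} (hpq : p ≠ q) (ap aq : ℝ) :
    Matrix.diagonal (fun i => F i + (if i = p then ap else 0) + (if i = q then aq else 0))
      = Matrix.diagonal F + ap • e p p + aq • e q q := by
  ext i j
  rcases eq_or_ne i j with h | h
  · subst h
    by_cases hip : i = p
    · subst hip
      simp [Matrix.single, hpq, hpq.symm]
    · by_cases hiq : i = q
      · subst hiq
        simp [Matrix.single, hip, Ne.symm hip]
      · simp [Matrix.single, hip, hiq, Ne.symm hip, Ne.symm hiq]
  · have h1 : ¬ (p = i ∧ p = j) := by rintro ⟨rfl, rfl⟩; exact h rfl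
    have h2 : ¬ (q = i ∧ q = j) := by rintro ⟨rfl, rfl⟩; exact h rfl
    simp [Matrix.diagonal_apply_ne _ h, Matrix.single, h1, h2]

lemma caseII (hU : U ∈ Matrix.unitaryGroup (Fin m) ℝ)
    (hMspec : M = U * Matrix.diagonal lam * star U)
    (D : Matrix (Fin m) (Fin m) ℝ →L[ℝ] Matrix (Fin m) (Fin m) ℝ)
    (hD : (fun H : Matrix (Fin m) (Fin m) ℝ => matFun f (M + H) - matFun f M - D H)
      =o[nhdsWithin 0 {H : Matrix (Fin m) (Fin m) ℝ | H.IsHermitian}]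
        (fun H : Matrix (Fin m) (Fin m) ℝ => H))
    {p q : Fin m} (hpq : p ≠ q) (hll : lam p = lam q)
    (hdp : DifferentiableAt ℝ f (lam p)) (hdq : DifferentiableAt ℝ f (lam q)) :
    D (U * (e p q + e q p) * star U)
      = deriv f (lam p) • (U * (e p q + e q p) * star U) := by
  obtain ⟨s, hs2⟩ : ∃ s : ℝ, s ^ 2 = 1 / 2 :=
    ⟨Real.sqrt 2 / 2, by
      rw [div_pow, Real.sq_sqrt (by norm_num : (0:ℝ) ≤ 2)]; norm_num⟩
  have hcs : s ^ 2 + s ^ 2 = 1 := by rw [hs2]; norm_num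
  have hcsv : s * s = 1 / 2 := by rw [← sq, hs2]
  set CS := U * (e p q + e q p) * star U with hCS
  have hCSh : CS.IsHermitian := herm_conj U (herm_epair p q)
  set G := rotG s s p q with hG
  have hGU : U * G ∈ Matrix.unitaryGroup (Fin m) ℝ :=
    mul_mem hU (rotG_mem p q hpq s s hcs)
  set dfun : ℝ → Fin m → ℝ :=
    fun t i => lam i + (if i = p then t else 0) + (if i = q then -t else 0) with hdfun
  have hdpv : ∀ t, dfun t p = lam p + t := by
    intro t; simp [hdfun, hpq]
  have hdqv : ∀ t, dfun t q = lam q + -t := by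
    intro t; simp [hdfun, hpq.symm]
  have hGt : ∀ t : ℝ, G * Matrix.diagonal (dfun t) * star G
      = Matrix.diagonal lam + (-t) • (e p q + e q p) := by
    intro t
    rw [hG, rotG_mul_diag_mul_star hpq s s hcs (dfun t), hdpv t, hdqv t]
    rw [show Matrix.diagonal (dfun t)
        = Matrix.diagonal lam + t • e p p + (-t) • e q q from diag_split_two lam hpq t (-t)]
    rw [hll]
    match_scalars <;>
      first
        | ring1
        | linear_combination (2*t) * hs2
        | linear_combination (-2*t) * hs2
        | linear_combination (2*t) * hcsv
        | linear_combination (-2*t) * hcsv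
  have hXt : ∀ t : ℝ, M + (-t) • CS
      = (U * G) * Matrix.diagonal (dfun t) * star (U * G) := by
    intro t
    rw [show (U * G) * Matrix.diagonal (dfun t) * star (U * G)
        = U * (G * Matrix.diagonal (dfun t) * star G) * star U by
      rw [Matrix.star_mul]; noncomm_ring]
    rw [hGt t, conj_add, ← hMspec, conj_smul]
  have hfd : ∀ t : ℝ, (fun i => f (dfun t i))
      = fun i => f (lam i) + (if i = p then f (lam p + t) - f (lam p) else 0)
          + (if i = q then f (lam q + -t) - f (lam q) else 0) := by
    intro t
    funext i
    by_cases hip : i = p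
    · subst hip; simp [hdpv t, hdfun, hpq]
    · by_cases hiq : i = q
      · subst hiq; simp [hdqv t, hdfun, hpq.symm]
      · simp [hdfun, hip, hiq]
  have hval : ∀ t : ℝ, matFun f (M + (-t) • CS)
      = U * Matrix.diagonal (fun i => f (lam i)) * star U
        + (f (lam p + t) - f (lam p)) • (U * e p p * star U)
        + (f (lam q + -t) - f (lam q)) • (U * e q q * star U)
        + (s^2 * (f (lam q + -t) - f (lam p + t))) • (U * e p p * star U)
        + (s^2 * (f (lam p + t) - f (lam q + -t))) • (U * e q q * star U)
        + (s * s * (f (lam q + -t) - f (lam p + t))) • CS := by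
    intro t
    rw [matFun_eq f hGU (hXt t)]
    rw [show (U * G) * Matrix.diagonal (fun i => f (dfun t i)) * star (U * G)
        = U * (G * Matrix.diagonal (fun i => f (dfun t i)) * star G) * star U by
      rw [Matrix.star_mul]; noncomm_ring]
    rw [hG, rotG_mul_diag_mul_star hpq s s hcs (fun i => f (dfun t i))]
    simp only []
    rw [hdpv t, hdqv t, hfd t,
      diag_split_two (fun i => f (lam i)) hpq (f (lam p + t) - f (lam p))
        (f (lam q + -t) - f (lam q))]
    simp only [conj_add, conj_smul, hCS]
  have hplus : HasDerivAt (fun t : ℝ => f (lam p + t)) (deriv f (lam p)) 0 := by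
    have hin : HasDerivAt (fun t : ℝ => lam p + t) 1 0 := by
      simpa using (hasDerivAt_id (0:ℝ)).const_add (lam p)
    have hout : HasDerivAt f (deriv f (lam p)) ((fun t : ℝ => lam p + t) 0) := by
      simpa using hdp.hasDerivAt
    simpa [Function.comp_def] using hout.comp (0:ℝ) hin
  have hminus : HasDerivAt (fun t : ℝ => f (lam q + -t)) (-deriv f (lam q)) 0 := by
    have hin : HasDerivAt (fun t : ℝ => lam q + -t) (-1) 0 := by
      simpa using ((hasDerivAt_id (0:ℝ)).neg.const_add (lam q))
    have hout : HasDerivAt f (deriv f (lam q)) ((fun t : ℝ => lam q + -t) 0) := by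
      simpa using hdq.hasDerivAt
    have := hout.comp (0:ℝ) hin
    simpa [Function.comp_def] using this
  have hH : HasDerivAt (fun t : ℝ => (-t) • CS) ((-1 : ℝ) • CS) 0 := by
    have := ((hasDerivAt_id (0:ℝ)).neg.smul_const CS); exact this
  have hY : HasDerivAt (fun t : ℝ => matFun f (M + (-t) • CS))
      ((deriv f (lam p)) • (U * e p p * star U)
        + (-deriv f (lam q)) • (U * e q q * star U)
        + (s^2 * (-deriv f (lam q) - deriv f (lam p))) • (U * e p p * star U)
        + (s^2 * (deriv f (lam p) - -deriv f (lam q))) • (U * e q q * star U)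
        + (s * s * (-deriv f (lam q) - deriv f (lam p))) • CS) 0 := by
    rw [funext hval]
    have h1 := (hplus.sub_const (f (lam p))).smul_const (U * e p p * star U)
    have h2 := (hminus.sub_const (f (lam q))).smul_const (U * e q q * star U)
    have h3 := (((hminus.sub hplus).const_mul (s^2))).smul_const (U * e p p * star U)
    have h4 := (((hplus.sub hminus).const_mul (s^2))).smul_const (U * e q q * star U)
    have h5 := (((hminus.sub hplus).const_mul (s*s))).smul_const CS
    exact (((((h1.const_add _).add h2).add h3).add h4).add h5)
  have key := deriv_transfer D hD (fun t => herm_smul hCSh (-t)) (by simp) hH hY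
  have hld : deriv f (lam q) = deriv f (lam p) := by rw [hll]
  rw [hld] at key
  have hsimp : (deriv f (lam p)) • (U * e p p * star U)
        + (-deriv f (lam p)) • (U * e q q * star U)
        + (s^2 * (-deriv f (lam p) - deriv f (lam p))) • (U * e p p * star U)
        + (s^2 * (deriv f (lam p) - -deriv f (lam p))) • (U * e q q * star U)
        + (s * s * (-deriv f (lam p) - deriv f (lam p))) • CS
      = (-deriv f (lam p)) • CS := by
    match_scalars <;>
      first
        | ring1
        | linear_combination (2 * deriv f (lam p)) * hs2
        | linear_combination (-2 * deriv f (lam p)) * hs2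
        | linear_combination (2 * deriv f (lam p)) * hcsv
        | linear_combination (-2 * deriv f (lam p)) * hcsv
  rw [hsimp, _root_.map_smul] at key
  have := congrArg (fun X => (-1 : ℝ) • X) key
  simpa using this

lemma caseIII (hU : U ∈ Matrix.unitaryGroup (Fin m) ℝ)
    (hMspec : M = U * Matrix.diagonal lam * star U)
    (D : Matrix (Fin m) (Fin m) ℝ →L[ℝ] Matrix (Fin m) (Fin m) ℝ)
    (hD : (fun H : Matrix (Fin m) (Fin m) ℝ => matFun f (M + H) - matFun f M - D H)
      =o[nhdsWithin 0 {H : Matrix (Fin m) (Fin m) ℝ | H.IsHermitian}]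
        (fun H : Matrix (Fin m) (Fin m) ℝ => H))
    {p q : Fin m} (hpq : p ≠ q) (hll : lam p ≠ lam q) :
    D (U * (e p q + e q p) * star U)
      = ((f (lam p) - f (lam q)) / (lam p - lam q)) • (U * (e p q + e q p) * star U) := by
  set CS := U * (e p q + e q p) * star U with hCS
  set Cpp := U * e p p * star U with hCpp
  set Cqq := U * e q q * star U with hCqq
  have hCSh : CS.IsHermitian := herm_conj U (herm_epair p q)
  have hCpph : Cpp.IsHermitian := herm_conj U (herm_e p)
  have hCqqh : Cqq.IsHermitian := herm_conj U (herm_e q)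
  have hcs : ∀ t : ℝ, (Real.cos t)^2 + (Real.sin t)^2 = 1 := fun t => by
    rw [← Real.sin_sq_add_cos_sq t]; ring
  set H : ℝ → Matrix (Fin m) (Fin m) ℝ := fun t =>
    (Real.sin t ^ 2 * (lam q - lam p)) • Cpp + (Real.sin t ^ 2 * (lam p - lam q)) • Cqq
      + (Real.cos t * Real.sin t * (lam q - lam p)) • CS with hHdef
  have hGU : ∀ t : ℝ, U * rotG (Real.cos t) (Real.sin t) p q
      ∈ Matrix.unitaryGroup (Fin m) ℝ :=
    fun t => mul_mem hU (rotG_mem p q hpq _ _ (hcs t))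
  have hXt : ∀ t : ℝ, M + H t
      = (U * rotG (Real.cos t) (Real.sin t) p q) * Matrix.diagonal lam
          * star (U * rotG (Real.cos t) (Real.sin t) p q) := by
    intro t
    rw [show (U * rotG (Real.cos t) (Real.sin t) p q) * Matrix.diagonal lam
          * star (U * rotG (Real.cos t) (Real.sin t) p q)
        = U * (rotG (Real.cos t) (Real.sin t) p q * Matrix.diagonal lam
            * star (rotG (Real.cos t) (Real.sin t) p q)) * star U by
      rw [Matrix.star_mul]; noncomm_ring]
    rw [rotG_mul_diag_mul_star hpq _ _ (hcs t) lam]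
    simp only [conj_add, conj_smul, hHdef, ← hMspec, ← hCpp, ← hCqq, ← hCS]
    abel
  have hval : ∀ t : ℝ, matFun f (M + H t)
      = U * Matrix.diagonal (fun i => f (lam i)) * star U
        + (Real.sin t ^ 2 * (f (lam q) - f (lam p))) • Cpp
        + (Real.sin t ^ 2 * (f (lam p) - f (lam q))) • Cqq
        + (Real.cos t * Real.sin t * (f (lam q) - f (lam p))) • CS := by
    intro t
    rw [matFun_eq f (hGU t) (hXt t)]
    rw [show (U * rotG (Real.cos t) (Real.sin t) p q)
          * Matrix.diagonal (fun i => f (lam i))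
          * star (U * rotG (Real.cos t) (Real.sin t) p q)
        = U * (rotG (Real.cos t) (Real.sin t) p q * Matrix.diagonal (fun i => f (lam i))
            * star (rotG (Real.cos t) (Real.sin t) p q)) * star U by
      rw [Matrix.star_mul]; noncomm_ring]
    rw [rotG_mul_diag_mul_star hpq _ _ (hcs t) (fun i => f (lam i))]
    simp only [conj_add, conj_smul, ← hCpp, ← hCqq, ← hCS]
  have hsin : HasDerivAt (fun t : ℝ => Real.sin t ^ 2) 0 0 := by
    have := (Real.hasDerivAt_sin 0).pow 2
    refine HasDerivAt.congr_deriv this ?_; simp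
  have hcossin : HasDerivAt (fun t : ℝ => Real.cos t * Real.sin t) 1 0 := by
    have := (Real.hasDerivAt_cos 0).mul (Real.hasDerivAt_sin 0)
    refine HasDerivAt.congr_deriv this ?_; simp
  have hherm : ∀ t, (H t).IsHermitian := by
    intro t
    exact ((herm_smul hCpph _).add (herm_smul hCqqh _)).add (herm_smul hCSh _)
  have hH0 : H 0 = 0 := by simp [hHdef]
  have hHd : HasDerivAt H ((lam q - lam p) • CS) 0 := by
    have h1 := (hsin.mul_const (lam q - lam p)).smul_const Cpp
    have h2 := (hsin.mul_const (lam p - lam q)).smul_const Cqq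
    have h3 := (hcossin.mul_const (lam q - lam p)).smul_const CS
    have := (h1.add h2).add h3
    rw [hHdef]
    refine this.congr_deriv ?_
    match_scalars <;> ring1
  have hY : HasDerivAt (fun t => matFun f (M + H t)) ((f (lam q) - f (lam p)) • CS) 0 := by
    rw [funext hval]
    have h1 := (hsin.mul_const (f (lam q) - f (lam p))).smul_const Cpp
    have h2 := (hsin.mul_const (f (lam p) - f (lam q))).smul_const Cqq
    have h3 := (hcossin.mul_const (f (lam q) - f (lam p))).smul_const CS
    have := ((((h1.const_add (U * Matrix.diagonal (fun i => f (lam i)) * star U)).add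
      h2).add h3))
    refine this.congr_deriv ?_
    match_scalars <;> ring1
  have key := deriv_transfer D hD hherm hH0 hHd hY
  rw [_root_.map_smul] at key
  have hne : lam q - lam p ≠ 0 := sub_ne_zero.mpr (Ne.symm hll)
  have := congrArg (fun X => ((lam q - lam p)⁻¹ : ℝ) • X) key
  simp only [smul_smul, inv_mul_cancel₀ hne, one_smul] at this
  rw [this]
  congr 1
  rw [div_eq_inv_mul]
  rw [show lam p - lam q = -(lam q - lam p) by ring,
    show f (lam p) - f (lam q) = -(f (lam q) - f (lam p)) by ring]
  rw [inv_neg, neg_mul_neg]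

lemma main (f : ℝ → ℝ)
    (hf : ContDiffOn ℝ 1 f (Set.Ioi (0 : ℝ)))
    (M : Matrix (Fin m) (Fin m) ℝ) (hM : M.PosDef)
    (D : Matrix (Fin m) (Fin m) ℝ →L[ℝ] Matrix (Fin m) (Fin m) ℝ)
    (hD : (fun H : Matrix (Fin m) (Fin m) ℝ => matFun f (M + H) - matFun f M - D H)
      =o[nhdsWithin 0 {H : Matrix (Fin m) (Fin m) ℝ | H.IsHermitian}]
        (fun H : Matrix (Fin m) (Fin m) ℝ => H)) :
    ∀ A B : Matrix (Fin m) (Fin m) ℝ, A.IsHermitian → B.IsHermitian →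
      (A * D B).trace = (B * D A).trace := by
  intro A B hA hB
  classical
  set U : Matrix (Fin m) (Fin m) ℝ := (hM.1.eigenvectorUnitary : Matrix (Fin m) (Fin m) ℝ)
    with hUdef
  set lam : Fin m → ℝ := hM.1.eigenvalues with hlamdef
  have hUmem : U ∈ Matrix.unitaryGroup (Fin m) ℝ := hM.1.eigenvectorUnitary.2
  have hU1 : U * star U = 1 := Matrix.mem_unitaryGroup_iff.mp hUmem
  have hMspec : M = U * Matrix.diagonal lam * star U := by
    simpa using hM.1.spectral_theorem
  have hdiff : ∀ i, DifferentiableAt ℝ f (lam i) := fun i =>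
    (hf.differentiableOn one_ne_zero).differentiableAt
      (Ioi_mem_nhds (hM.eigenvalues_pos i))
  set k : Fin m → Fin m → ℝ := fun i j =>
    if lam i = lam j then deriv f (lam i)
    else (f (lam i) - f (lam j)) / (lam i - lam j) with hkdef
  have hksymm : ∀ i j, k i j = k j i := by
    intro i j
    by_cases h : lam i = lam j
    · simp [hkdef, h]
    · have h' : lam j ≠ lam i := fun hh => h hh.symm
      simp only [hkdef, if_neg h, if_neg h']
      rw [div_eq_div_iff (sub_ne_zero.mpr h) (sub_ne_zero.mpr h')]
      ring
  have hkey : ∀ p q : Fin m, D (U * (e p q + e q p) * star U)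
      = k p q • (U * (e p q + e q p) * star U) := by
    intro p q
    by_cases hpq : p = q
    · subst hpq
      have h1 := caseI hUmem hMspec D hD p (hdiff p)
      have h2 : (e p p + e p p : Matrix (Fin m) (Fin m) ℝ) = (2:ℝ) • e p p := by
        rw [two_smul]
      rw [h2, conj_smul, _root_.map_smul, h1, hkdef]
      simp only [if_true, eq_self_iff_true]
      rw [smul_comm]
    · by_cases hll : lam p = lam q
      · have := caseII hUmem hMspec D hD hpq hll (hdiff p) (hdiff q)
        rw [this, hkdef]
        simp only [if_pos hll]
      · have := caseIII hUmem hMspec D hD hpq hll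
        rw [this, hkdef]
        simp only [if_neg hll]
  have hdecomp : ∀ X : Matrix (Fin m) (Fin m) ℝ, X.IsHermitian →
      (2:ℝ) • X = ∑ p : Fin m, ∑ q : Fin m,
        (star U * X * U) p q • (U * (e p q + e q p) * star U) := by
    intro X hX
    set X' : Matrix (Fin m) (Fin m) ℝ := star U * X * U with hX'def
    have hX'herm : X'.IsHermitian := by
      have := herm_conj (star U) hX
      rwa [star_star] at this
    have hX'symm : ∀ i j : Fin m, X' j i = X' i j := by
      intro i j
      conv_lhs => rw [← hX'herm]
      simp [Matrix.conjTranspose_apply]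
    have hconj : U * X' * star U = X := by
      rw [show U * X' * star U = (U * star U) * X * (U * star U) by rw [hX'def]; noncomm_ring,
        hU1, one_mul, mul_one]
    have hsum1 : ∀ Y : Matrix (Fin m) (Fin m) ℝ,
        ∑ p : Fin m, ∑ q : Fin m, Y p q • (U * e p q * star U) = U * Y * star U := by
      intro Y
      rw [show U * Y * star U
          = U * (∑ p : Fin m, ∑ q : Fin m, Matrix.single p q (Y p q)) * star U by
        rw [← Matrix.matrix_eq_sum_single Y]]
      rw [Finset.mul_sum, Finset.sum_mul]
      apply Finset.sum_congr rfl
      intro p _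
      rw [Finset.mul_sum, Finset.sum_mul]
      apply Finset.sum_congr rfl
      intro q _
      rw [show Matrix.single p q (Y p q) = Y p q • e p q by
        rw [Matrix.smul_single]; congr 1; simp]
      rw [conj_smul]
    have expand : ∑ p : Fin m, ∑ q : Fin m, X' p q • (U * (e p q + e q p) * star U)
        = (∑ p : Fin m, ∑ q : Fin m, X' p q • (U * e p q * star U))
          + (∑ p : Fin m, ∑ q : Fin m, X' p q • (U * e q p * star U)) := by
      rw [← Finset.sum_add_distrib]
      apply Finset.sum_congr rfl
      intro p _
      rw [← Finset.sum_add_distrib]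
      apply Finset.sum_congr rfl
      intro q _
      rw [conj_add, smul_add]
    have hswap : ∑ p : Fin m, ∑ q : Fin m, X' p q • (U * e q p * star U)
        = ∑ p : Fin m, ∑ q : Fin m, X' p q • (U * e p q * star U) := by
      rw [Finset.sum_comm]
      apply Finset.sum_congr rfl
      intro p _
      apply Finset.sum_congr rfl
      intro q _
      rw [hX'symm p q]
    rw [expand, hswap, hsum1, hconj, two_smul]
  have htr : ∀ Y : Matrix (Fin m) (Fin m) ℝ, ∀ p q : Fin m,
      (Y * (U * (e p q + e q p) * star U)).trace
        = (star U * Y * U) q p + (star U * Y * U) p q := by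
    intro Y p q
    rw [show Y * (U * (e p q + e q p) * star U) = (Y * U * (e p q + e q p)) * star U by
      noncomm_ring]
    rw [Matrix.trace_mul_comm]
    rw [show star U * (Y * U * (e p q + e q p)) = (star U * Y * U) * (e p q + e q p) by
      noncomm_ring]
    rw [Matrix.mul_add, Matrix.trace_add, trace_mul_e, trace_mul_e]
  have hmain : ∀ X Y : Matrix (Fin m) (Fin m) ℝ, X.IsHermitian → Y.IsHermitian →
      2 * (X * D Y).trace = ∑ p : Fin m, ∑ q : Fin m,
        ((star U * Y * U) p q * k p q)
          * ((star U * X * U) q p + (star U * X * U) p q) := by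
    intro X Y hX hY
    have h1 : D ((2:ℝ) • Y) = ∑ p : Fin m, ∑ q : Fin m,
        ((star U * Y * U) p q * k p q) • (U * (e p q + e q p) * star U) := by
      rw [hdecomp Y hY, map_sum]
      apply Finset.sum_congr rfl
      intro p _
      rw [map_sum]
      apply Finset.sum_congr rfl
      intro q _
      rw [_root_.map_smul, hkey p q, smul_smul]
    have h2 : 2 * (X * D Y).trace = (X * D ((2:ℝ) • Y)).trace := by
      rw [_root_.map_smul, Matrix.mul_smul, Matrix.trace_smul, smul_eq_mul]
    rw [h2, h1]
    rw [Finset.mul_sum, Matrix.trace_sum]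
    refine Finset.sum_congr rfl fun p _ => ?_
    rw [Finset.mul_sum, Matrix.trace_sum]
    refine Finset.sum_congr rfl fun q _ => ?_
    rw [mul_smul_comm, Matrix.trace_smul, smul_eq_mul, htr X p q]
  have hfin : ∑ p : Fin m, ∑ q : Fin m,
        ((star U * B * U) p q * k p q)
          * ((star U * A * U) q p + (star U * A * U) p q)
      = ∑ p : Fin m, ∑ q : Fin m,
        ((star U * A * U) p q * k p q)
          * ((star U * B * U) q p + (star U * B * U) p q) := by
    set A' := star U * A * U
    set B' := star U * B * U
    have e1 : ∀ p q : Fin m, B' p q * k p q * (A' q p + A' p q)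
        = B' p q * k p q * A' q p + B' p q * k p q * A' p q := fun p q => by ring
    have e2 : ∀ p q : Fin m, A' p q * k p q * (B' q p + B' p q)
        = A' p q * k p q * B' q p + A' p q * k p q * B' p q := fun p q => by ring
    simp only [e1, e2, Finset.sum_add_distrib]
    have hpart1 : ∑ p : Fin m, ∑ q : Fin m, B' p q * k p q * A' q p
        = ∑ p : Fin m, ∑ q : Fin m, A' p q * k p q * B' q p := by
      rw [Finset.sum_comm]
      apply Finset.sum_congr rfl
      intro p _
      apply Finset.sum_congr rfl
      intro q _
      rw [hksymm q p]
      ring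
    have hpart2 : ∑ p : Fin m, ∑ q : Fin m, B' p q * k p q * A' p q
        = ∑ p : Fin m, ∑ q : Fin m, A' p q * k p q * B' p q := by
      apply Finset.sum_congr rfl
      intro p _
      apply Finset.sum_congr rfl
      intro q _
      ring
    rw [hpart1, hpart2]
  have hAB := hmain A B hA hB
  have hBA := hmain B A hB hA
  rw [hfin] at hAB
  rw [← hBA] at hAB
  linarith

end cases

end MFA

open Asymptotics in
/-- Let `f` be continuously differentiable on `(0,∞)`, `M`
symmetric positive definite, and suppose `X ↦ f(X)` is Fréchet differentiable
at `M` on the space of symmetric matrices, with derivative `D` (that is,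
`f(M+H) = f(M) + D(H) + o(‖H‖)` for symmetric increments `H`). Then for all
symmetric matrices `A`, `B`, `trace (A ⬝ D(B)) = trace (B ⬝ D(A))`. -/
theorem trace_fderiv_matFun_symm (f : ℝ → ℝ)
    (hf : ContDiffOn ℝ 1 f (Set.Ioi (0 : ℝ)))
    (m : ℕ) (M : Matrix (Fin m) (Fin m) ℝ) (hM : M.PosDef)
    (D : Matrix (Fin m) (Fin m) ℝ →L[ℝ] Matrix (Fin m) (Fin m) ℝ)
    (hD : (fun H : Matrix (Fin m) (Fin m) ℝ => matFun f (M + H) - matFun f M - D H)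
      =o[nhdsWithin 0 {H : Matrix (Fin m) (Fin m) ℝ | H.IsHermitian}]
        (fun H : Matrix (Fin m) (Fin m) ℝ => H)) :
    ∀ A B : Matrix (Fin m) (Fin m) ℝ, A.IsHermitian → B.IsHermitian →
      (A * D B).trace = (B * D A).trace :=
  MFA.main f hf M hM D hD
end

section
/- Let f : ℝ → ℝ be differentiable on (0,∞) and operator antitone on (0,∞), let M be an m×m real symmetric positive definite matrix, and suppose the map X ↦ f(X) (applying f to symmetric matrices via the spectral decomposition) is Fréchet differentiable at M on the space of m×m real symmetric matrices, with derivative D. Then for all m×m real symmetric matrices A, B with B − A positive semidefinite, the matrix D(A) − D(B) is positive semidefinite. -/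
attribute [local instance] Matrix.normedAddCommGroup Matrix.normedSpace

open Matrix in
/-- Quadratic-form upper bound by the sum of absolute values of the entries. -/
lemma aux_quad_upper {m : ℕ} (A : Matrix (Fin m) (Fin m) ℝ) (x : Fin m → ℝ) :
    |x ⬝ᵥ (A *ᵥ x)| ≤ (∑ i, ∑ j, |A i j|) * (x ⬝ᵥ x) := by
  have hxx : ∀ i j, |x i| * |x j| ≤ x ⬝ᵥ x := by
    intro i j
    have h1 : x i ^ 2 ≤ x ⬝ᵥ x := by
      rw [dotProduct]
      simpa [pow_two] using Finset.single_le_sum (f := fun k => x k * x k)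
        (fun k _ => mul_self_nonneg (x k)) (Finset.mem_univ i)
    have h2 : x j ^ 2 ≤ x ⬝ᵥ x := by
      rw [dotProduct]
      simpa [pow_two] using Finset.single_le_sum (f := fun k => x k * x k)
        (fun k _ => mul_self_nonneg (x k)) (Finset.mem_univ j)
    nlinarith [sq_nonneg (|x i| - |x j|), sq_abs (x i), sq_abs (x j), abs_nonneg (x i),
      abs_nonneg (x j)]
  have expand : x ⬝ᵥ (A *ᵥ x) = ∑ i, ∑ j, x i * (A i j * x j) := by
    simp [dotProduct, Matrix.mulVec, Finset.mul_sum]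
  rw [expand]
  calc |∑ i, ∑ j, x i * (A i j * x j)| ≤ ∑ i, ∑ j, |x i * (A i j * x j)| := by
        refine (Finset.abs_sum_le_sum_abs _ _).trans ?_
        exact Finset.sum_le_sum fun i _ => Finset.abs_sum_le_sum_abs _ _
    _ ≤ ∑ i, ∑ j, |A i j| * (x ⬝ᵥ x) := by
        refine Finset.sum_le_sum fun i _ => Finset.sum_le_sum fun j _ => ?_
        rw [abs_mul, abs_mul]
        calc |x i| * (|A i j| * |x j|) = |A i j| * (|x i| * |x j|) := by ring
          _ ≤ |A i j| * (x ⬝ᵥ x) := mul_le_mul_of_nonneg_left (hxx i j) (abs_nonneg _)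
    _ = (∑ i, ∑ j, |A i j|) * (x ⬝ᵥ x) := by
        simp [Finset.sum_mul]

open Matrix in
/-- Quadratic-form lower bound for a positive definite matrix. -/
lemma aux_quad_lower {m : ℕ} {M : Matrix (Fin m) (Fin m) ℝ} (hM : M.PosDef) :
    ∃ ε > (0:ℝ), ∀ x : Fin m → ℝ, ε * (x ⬝ᵥ x) ≤ x ⬝ᵥ (M *ᵥ x) := by
  rcases Nat.eq_zero_or_pos m with hm | hm
  · subst hm
    exact ⟨1, one_pos, fun x => by simp [dotProduct]⟩
  · have : Nonempty (Fin m) := ⟨⟨0, hm⟩⟩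
    obtain ⟨i₀, -, hi₀⟩ := Finset.exists_min_image Finset.univ hM.1.eigenvalues
      Finset.univ_nonempty
    refine ⟨hM.1.eigenvalues i₀, hM.eigenvalues_pos i₀, fun x => ?_⟩
    set U : Matrix (Fin m) (Fin m) ℝ := (hM.1.eigenvectorUnitary : Matrix (Fin m) (Fin m) ℝ)
      with hU
    set y : Fin m → ℝ := star U *ᵥ x with hy
    have hdot : ∀ z : Fin m → ℝ, x ⬝ᵥ (U *ᵥ z) = y ⬝ᵥ z := by
      intro z
      rw [hy, Matrix.dotProduct_mulVec]
      congr 1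
      rw [Matrix.star_eq_conjTranspose, conjTranspose_eq_transpose_of_trivial,
        Matrix.mulVec_transpose]
    have hxMx : x ⬝ᵥ (M *ᵥ x) = ∑ i, hM.1.eigenvalues i * (y i * y i) := by
      conv_lhs => rw [hM.1.spectral_theorem, Unitary.conjStarAlgAut_apply, mul_assoc, ← Matrix.mulVec_mulVec]
      rw [hdot, ← Matrix.mulVec_mulVec]
      simp [dotProduct, Matrix.mulVec_diagonal, hy]
      exact Finset.sum_congr rfl fun i _ => by ring
    have hUU : U * star U = 1 := (Matrix.mem_unitaryGroup_iff).mp hM.1.eigenvectorUnitary.2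
    have hUy : U *ᵥ y = x := by
      rw [hy, Matrix.mulVec_mulVec, hUU, Matrix.one_mulVec]
    have hxx : x ⬝ᵥ x = y ⬝ᵥ y := by
      have h := hdot y
      rw [hUy] at h
      exact h
    rw [hxMx, hxx, dotProduct, Finset.mul_sum]
    refine Finset.sum_le_sum fun i _ => ?_
    have := hi₀ i (Finset.mem_univ i)
    nlinarith [mul_self_nonneg (y i)]

open Matrix in
/-- A nonnegative scalar multiple of a positive semidefinite matrix is
positive semidefinite. -/
lemma aux_psd_smul {m : ℕ} {N : Matrix (Fin m) (Fin m) ℝ} (hN : N.PosSemidef) {c : ℝ}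
    (hc : 0 ≤ c) : (c • N).PosSemidef := by
  refine Matrix.PosSemidef.of_dotProduct_mulVec_nonneg ?_ (fun x => ?_)
  · show (c • N)ᴴ = c • N
    rw [Matrix.conjTranspose_smul, hN.1.eq]
    simp
  · rw [Matrix.smul_mulVec, dotProduct_smul]
    exact smul_nonneg hc (hN.dotProduct_mulVec_nonneg x)

open Matrix in
/-- A real scalar multiple of a Hermitian real matrix is Hermitian. -/
lemma aux_herm_smul {m : ℕ} {A : Matrix (Fin m) (Fin m) ℝ} (hA : A.IsHermitian) (t : ℝ) :
    (t • A).IsHermitian := by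
  show (t • A)ᴴ = t • A
  rw [Matrix.conjTranspose_smul, hA.eq]
  simp

open Matrix in
/-- Small positive Hermitian perturbations of a positive definite matrix stay
positive definite. -/
lemma aux_eventually_posDef {m : ℕ} {M A : Matrix (Fin m) (Fin m) ℝ} (hM : M.PosDef)
    (hA : A.IsHermitian) :
    ∀ᶠ t in nhdsWithin 0 (Set.Ioi (0:ℝ)), (M + t • A).PosDef := by
  obtain ⟨ε, hε, hlow⟩ := aux_quad_lower hM
  have hS0 : (0:ℝ) ≤ ∑ i, ∑ j, |A i j| :=
    Finset.sum_nonneg fun i _ => Finset.sum_nonneg fun j _ => abs_nonneg _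
  have hc0 : 0 < (∑ i, ∑ j, |A i j|) + 1 := by linarith
  have hmem : Set.Ioo (0:ℝ) (ε / ((∑ i, ∑ j, |A i j|) + 1)) ∈ nhdsWithin 0 (Set.Ioi (0:ℝ)) :=
    Ioo_mem_nhdsGT (div_pos hε hc0)
  filter_upwards [hmem] with t ht
  obtain ⟨ht0, htε⟩ := ht
  have htA : (t • A).IsHermitian := aux_herm_smul hA t
  refine Matrix.PosDef.of_dotProduct_mulVec_pos (hM.1.add htA) fun x hx => ?_
  rw [Matrix.add_mulVec, dotProduct_add, Matrix.smul_mulVec,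
    dotProduct_smul]
  have hxx : 0 < x ⬝ᵥ x := by
    have := Matrix.dotProduct_star_self_pos_iff (v := x) |>.mpr hx
    simpa using this
  have h1 := hlow x
  have h2 := aux_quad_upper A x
  have htc : t * ((∑ i, ∑ j, |A i j|) + 1) < ε := (lt_div_iff₀ hc0).mp htε
  have habs : |t * (x ⬝ᵥ A *ᵥ x)| ≤ t * ((∑ i, ∑ j, |A i j|) * (x ⬝ᵥ x)) := by
    rw [abs_mul, abs_of_pos ht0]
    exact mul_le_mul_of_nonneg_left h2 ht0.le
  simp only [smul_eq_mul, star_trivial]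
  nlinarith [neg_abs_le (t * (x ⬝ᵥ A *ᵥ x)), mul_lt_mul_of_pos_right htc hxx,
    mul_pos ht0 hxx]

open Matrix in
/-- The set of positive semidefinite matrices is closed. -/
lemma aux_isClosed_psd (m : ℕ) :
    IsClosed {N : Matrix (Fin m) (Fin m) ℝ | N.PosSemidef} := by
  have hset : {N : Matrix (Fin m) (Fin m) ℝ | N.PosSemidef} =
      (⋂ x : Fin m → ℝ, {N | 0 ≤ x ⬝ᵥ (N *ᵥ x)}) ∩ {N | Nᴴ - N = 0} := by
    ext N
    simp only [Set.mem_setOf_eq, Set.mem_inter_iff, Set.mem_iInter, Matrix.posSemidef_iff_dotProduct_mulVec,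
      sub_eq_zero]
    constructor
    · rintro ⟨h1, h2⟩
      exact ⟨fun x => by simpa using h2 x, h1⟩
    · rintro ⟨h2, h1⟩
      exact ⟨h1, fun x => by simpa using h2 x⟩
  rw [hset]
  refine IsClosed.inter (isClosed_iInter fun x => ?_) ?_
  · have hlin : IsLinearMap ℝ fun N : Matrix (Fin m) (Fin m) ℝ => x ⬝ᵥ (N *ᵥ x) := by
      constructor
      · intro N N'
        rw [Matrix.add_mulVec, dotProduct_add]
      · intro c N
        rw [Matrix.smul_mulVec, dotProduct_smul]
    have hcont : Continuous fun N : Matrix (Fin m) (Fin m) ℝ => x ⬝ᵥ (N *ᵥ x) :=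
      (hlin.mk' _).continuous_of_finiteDimensional
    exact isClosed_le continuous_const hcont
  · have hlin : IsLinearMap ℝ fun N : Matrix (Fin m) (Fin m) ℝ => Nᴴ - N := by
      constructor
      · intro N N'
        rw [Matrix.conjTranspose_add]
        abel
      · intro c N
        rw [Matrix.conjTranspose_smul]
        simp [smul_sub]
    have hcont : Continuous fun N : Matrix (Fin m) (Fin m) ℝ => Nᴴ - N :=
      (hlin.mk' _).continuous_of_finiteDimensional
    exact isClosed_eq hcont continuous_const

open Asymptotics in
/-- Let `f` be differentiable and operator antitone on
`(0,∞)`, `M` symmetric positive definite, and suppose `X ↦ f(X)` is Fréchet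
differentiable at `M` on the space of symmetric matrices, with derivative `D`.
Then for all symmetric matrices `A ⪯ B` (i.e. `B - A` positive semidefinite),
the matrix `D(A) - D(B)` is positive semidefinite. -/
theorem fderiv_matFun_antitone (f : ℝ → ℝ)
    (hf_diff : DifferentiableOn ℝ f (Set.Ioi (0 : ℝ)))
    (hf_anti : OperatorAntitoneOn f)
    (m : ℕ) (M : Matrix (Fin m) (Fin m) ℝ) (hM : M.PosDef)
    (D : Matrix (Fin m) (Fin m) ℝ →L[ℝ] Matrix (Fin m) (Fin m) ℝ)
    (hD : (fun H : Matrix (Fin m) (Fin m) ℝ => matFun f (M + H) - matFun f M - D H)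
      =o[nhdsWithin 0 {H : Matrix (Fin m) (Fin m) ℝ | H.IsHermitian}]
        (fun H : Matrix (Fin m) (Fin m) ℝ => H)) :
    ∀ A B : Matrix (Fin m) (Fin m) ℝ, A.IsHermitian → B.IsHermitian →
      (B - A).PosSemidef → (D A - D B).PosSemidef := by
  intro A B hA hB hBA
  set l : Filter ℝ := nhdsWithin 0 (Set.Ioi (0:ℝ)) with hl
  -- the error term in direction C, rescaled, tends to zero
  have key : ∀ (C : Matrix (Fin m) (Fin m) ℝ), C.IsHermitian →
      Filter.Tendsto
        (fun t : ℝ => t⁻¹ • (matFun f (M + t • C) - matFun f M - D (t • C)))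
        l (nhds 0) := by
    intro C hC
    have htend : Filter.Tendsto (fun t : ℝ => t • C) l
        (nhdsWithin 0 {H : Matrix (Fin m) (Fin m) ℝ | H.IsHermitian}) := by
      apply tendsto_nhdsWithin_of_tendsto_nhds_of_eventually_within
      · have h0 : Filter.Tendsto (fun t : ℝ => t • C) (nhds 0) (nhds ((0:ℝ) • C)) :=
          (continuous_id.smul continuous_const).tendsto 0
        rw [zero_smul] at h0
        exact h0.mono_left nhdsWithin_le_nhds
      · filter_upwards with t
        exact aux_herm_smul hC t
    have h1 : (fun t : ℝ => matFun f (M + t • C) - matFun f M - D (t • C)) =o[l]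
        (fun t : ℝ => t • C) := hD.comp_tendsto htend
    have h2 : (fun t : ℝ => t • C) =O[l] (fun t : ℝ => t) := by
      rw [Asymptotics.isBigO_iff]
      refine ⟨‖C‖, ?_⟩
      filter_upwards with t
      rw [norm_smul]
      simp [mul_comm]
    have h3 := h1.trans_isBigO h2
    refine tendsto_zero_iff_norm_tendsto_zero.mpr ?_
    have h4 := (h3.norm_left).tendsto_div_nhds_zero
    refine h4.congr' ?_
    filter_upwards [self_mem_nhdsWithin] with t ht
    have ht0 : (0:ℝ) < t := ht
    rw [norm_smul, Real.norm_eq_abs, abs_of_pos (inv_pos.mpr ht0), div_eq_inv_mul, mul_comm]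
  -- the rescaled difference tends to `D A - D B`
  have hFtend : Filter.Tendsto
      (fun t : ℝ => t⁻¹ • (matFun f (M + t • A) - matFun f (M + t • B)))
      l (nhds (D A - D B)) := by
    have hsum := ((key A hA).sub (key B hB)).add_const (D A - D B)
    rw [sub_zero, zero_add] at hsum
    refine hsum.congr' ?_
    filter_upwards [self_mem_nhdsWithin] with t ht
    have ht0 : t ≠ 0 := ne_of_gt ht
    simp only [map_smul]
    match_scalars <;> field_simp <;> ring
  -- the rescaled difference is eventually positive semidefinite
  have hpsd : ∀ᶠ t in l,
      (t⁻¹ • (matFun f (M + t • A) - matFun f (M + t • B))).PosSemidef := by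
    filter_upwards [aux_eventually_posDef hM hA, aux_eventually_posDef hM hB,
      self_mem_nhdsWithin] with t h1 h2 ht
    have ht0 : (0:ℝ) < t := ht
    refine aux_psd_smul ?_ (inv_nonneg.mpr ht0.le)
    have hsub : (M + t • B) - (M + t • A) = t • (B - A) := by
      rw [smul_sub]
      abel
    exact hf_anti m (M + t • A) (M + t • B) h1 h2
      (by rw [hsub]; exact aux_psd_smul hBA ht0.le)
  exact (aux_isClosed_psd m).mem_of_tendsto hFtend hpsd
end

section
/- Let p ∈ [0,1], let r and s be positive integers with r ≤ s, and let w ∈ ℝ^s be a nonnegative vector with Σ_{i=1}^s w_i = r, sorted so that w₁ ≥ w₂ ≥ … ≥ w_s ≥ 0, and satisfying w_i ≤ 1 for all i. Then (1/r) Σ_{i=1}^r w_i^{1−p} ≥ (r/s)^{1−p}, with the convention 0⁰ = 0. -/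
set_option maxHeartbeats 1000000


/-- Real power with the convention `0 ^ q = 0` (in particular `0 ^ 0 = 0`). -/
noncomputable def cpow (x q : ℝ) : ℝ := if x = 0 then 0 else Real.rpow x q

/-- **Lemma, condition (i).** Let `p ∈ [0,1]`, `1 ≤ r ≤ s`, and
`w` a nonnegative, nonincreasing vector of length `s` summing to `r` with all
entries at most `1`. Then `(1/r) ∑_{i=1}^r w_i^{1-p} ≥ (r/s)^{1-p}`
(convention `0⁰ = 0`). -/
theorem sorted_sum_rpow_lower_bound_of_le_one (p : ℝ) (hp : p ∈ Set.Icc (0 : ℝ) 1)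
    (r s : ℕ) (hr : 0 < r) (hrs : r ≤ s)
    (w : ℕ → ℝ) (hw0 : ∀ i < s, 0 ≤ w i)
    (hsorted : ∀ i j, i ≤ j → j < s → w j ≤ w i)
    (hsum : ∑ i ∈ Finset.range s, w i = r)
    (hle1 : ∀ i < s, w i ≤ 1) :
    Real.rpow ((r : ℝ) / s) (1 - p) ≤
      (1 / (r : ℝ)) * ∑ i ∈ Finset.range r, cpow (w i) (1 - p) := by
  obtain ⟨hp0, hp1⟩ := hp
  set q : ℝ := 1 - p with hqdef
  have hq0 : 0 ≤ q := by rw [hqdef]; linarith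
  have hq1 : q ≤ 1 := by rw [hqdef]; linarith
  have hs : 0 < s := lt_of_lt_of_le hr hrs
  have hr0 : (0:ℝ) < r := by exact_mod_cast hr
  have hs0 : (0:ℝ) < s := by exact_mod_cast hs
  have hrs' : (r:ℝ) ≤ s := by exact_mod_cast hrs
  set t : ℝ := (r:ℝ) / s with htdef
  have ht0 : 0 < t := div_pos hr0 hs0
  have ht1 : t ≤ 1 := by rw [htdef, div_le_one hs0]; exact hrs'
  have hst : (s:ℝ) * t = r := by rw [htdef]; field_simp
  have hr1s : r - 1 < s := by omega
  set m : ℝ := w (r - 1) with hmdef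
  -- m > 0
  have hm0 : 0 < m := by
    by_contra hcon
    push_neg at hcon
    have hmz : m = 0 := le_antisymm hcon (hw0 _ hr1s)
    have hb : ∀ i ∈ Finset.range s, w i ≤ if i < r - 1 then 1 else 0 := by
      intro i hi
      simp only [Finset.mem_range] at hi
      by_cases h : i < r - 1
      · simp only [h, if_true]; exact hle1 i hi
      · simp only [h, if_false]
        have := hsorted (r-1) i (by omega) hi
        rw [← hmdef, hmz] at this
        exact this
    have hle := Finset.sum_le_sum hb
    rw [hsum] at hle
    have hfil : (Finset.range s).filter (fun i => i < r - 1) = Finset.range (r-1) := by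
      ext i; simp only [Finset.mem_filter, Finset.mem_range]; omega
    rw [← Finset.sum_filter, hfil, Finset.sum_const, Finset.card_range, nsmul_eq_mul,
      mul_one] at hle
    have : ((r - 1 : ℕ) : ℝ) = (r:ℝ) - 1 := by
      have : (1:ℕ) ≤ r := hr
      push_cast [Nat.cast_sub this]
      ring
    rw [this] at hle
    linarith
  have hmw : ∀ i < r, m ≤ w i := fun i hi => hsorted i (r-1) (by omega) hr1s
  have hw1' : ∀ i < r, w i ≤ 1 := fun i hi => hle1 i (by omega)
  have hm1 : m ≤ 1 := hle1 _ hr1s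
  have hwpos : ∀ i < r, 0 < w i := fun i hi => lt_of_lt_of_le hm0 (hmw i hi)
  -- rewrite cpow as rpow
  have hcpow : ∑ i ∈ Finset.range r, cpow (w i) q = ∑ i ∈ Finset.range r, (w i) ^ q := by
    refine Finset.sum_congr rfl fun i hi => ?_
    rw [Finset.mem_range] at hi
    simp only [cpow, if_neg (hwpos i hi).ne']
    rfl
  set S : ℝ := ∑ i ∈ Finset.range r, w i with hSdef
  -- main inequality:  r * t^q ≤ ∑ (w i)^q
  have key : (r:ℝ) * t ^ q ≤ ∑ i ∈ Finset.range r, (w i) ^ q := by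
    rcases le_or_gt t m with hmt | hmt
    · -- easy case: every w i ≥ t
      have : ∀ i ∈ Finset.range r, t ^ q ≤ (w i) ^ q := by
        intro i hi
        rw [Finset.mem_range] at hi
        exact Real.rpow_le_rpow ht0.le (le_trans hmt (hmw i hi)) hq0
      calc (r:ℝ) * t ^ q = (Finset.range r).card • (t ^ q) := by
            rw [Finset.card_range, nsmul_eq_mul]
        _ ≤ ∑ i ∈ Finset.range r, (w i) ^ q := Finset.card_nsmul_le_sum _ _ _ this
    · -- hard case: m < t
      have hm1' : m < 1 := lt_of_lt_of_le hmt ht1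
      have h1m : 0 < 1 - m := by linarith
      -- split sum and tail bound
      have hsplit : S + ∑ i ∈ Finset.Ico r s, w i = (r:ℝ) := by
        rw [hSdef, Finset.range_eq_Ico, Finset.sum_Ico_consecutive w (Nat.zero_le r) hrs,
          ← Finset.range_eq_Ico, hsum]
      have htail_nonneg : 0 ≤ ∑ i ∈ Finset.Ico r s, w i :=
        Finset.sum_nonneg fun i hi => hw0 i (Finset.mem_Ico.1 hi).2
      have htail_le : ∑ i ∈ Finset.Ico r s, w i ≤ ((s:ℝ) - r) * m := by
        have hbd : ∀ i ∈ Finset.Ico r s, w i ≤ m := by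
          intro i hi
          rw [Finset.mem_Ico] at hi
          exact hsorted (r-1) i (by omega) hi.2
        calc ∑ i ∈ Finset.Ico r s, w i ≤ (Finset.Ico r s).card • m :=
              Finset.sum_le_card_nsmul _ _ _ hbd
          _ = ((s:ℝ) - r) * m := by
              rw [Nat.card_Ico, nsmul_eq_mul, Nat.cast_sub hrs]
      have hS_le : S ≤ (r:ℝ) := by linarith
      have hS_lower : (r:ℝ) - ((s:ℝ) - r) * m ≤ S := by linarith
      -- chord bound per element
      have chord : ∀ i ∈ Finset.range r,
          (w i - m) + m ^ q * (1 - w i) ≤ (1 - m) * (w i) ^ q := by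
        intro i hi
        rw [Finset.mem_range] at hi
        set x := w i with hxdef
        have hxm : m ≤ x := hmw i hi
        have hx1 : x ≤ 1 := hw1' i hi
        have ha : 0 ≤ (1-x)/(1-m) := div_nonneg (by linarith) h1m.le
        have hb : 0 ≤ (x-m)/(1-m) := div_nonneg (by linarith) h1m.le
        have hab : (1-x)/(1-m) + (x-m)/(1-m) = 1 := by field_simp; ring
        have hc := (Real.concaveOn_rpow hq0 hq1).2 (Set.mem_Ici.2 hm0.le)
          (Set.mem_Ici.2 (zero_le_one)) ha hb hab
        simp only [smul_eq_mul, Real.one_rpow, mul_one] at hc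
        have hx' : (1-x)/(1-m) * m + (x-m)/(1-m) = x := by field_simp; ring
        rw [hx'] at hc
        have hmul := mul_le_mul_of_nonneg_left hc h1m.le
        have hexp : (1-m) * ((1-x)/(1-m) * m ^ q + (x-m)/(1-m))
            = (x - m) + m ^ q * (1 - x) := by field_simp; ring
        rw [hexp] at hmul
        exact hmul
      -- sum up the chord bounds
      have e1 : ∑ i ∈ Finset.range r, (w i - m) = S - r * m := by
        rw [Finset.sum_sub_distrib, Finset.sum_const, Finset.card_range, nsmul_eq_mul, ← hSdef]
      have e2 : ∑ i ∈ Finset.range r, (1 - w i) = (r:ℝ) - S := by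
        rw [Finset.sum_sub_distrib, Finset.sum_const, Finset.card_range, nsmul_eq_mul,
          mul_one, ← hSdef]
      have hsum2 : (S - r*m) + m ^ q * ((r:ℝ) - S)
          ≤ (1 - m) * ∑ i ∈ Finset.range r, (w i) ^ q := by
        have h := Finset.sum_le_sum chord
        rw [Finset.sum_add_distrib, ← Finset.mul_sum, e1, e2, ← Finset.mul_sum] at h
        exact h
      -- key inequality (K) : t^q * ((q+1)*s - q*r) ≤ s
      have hmq1 : m ^ q ≤ 1 := Real.rpow_le_one hm0.le hm1 hq0
      have htq0 : 0 < t ^ q := Real.rpow_pos_of_pos ht0 q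
      have hAM : t ^ q ≤ q * t + (1 - q) := by
        have := Real.geom_mean_le_arith_mean2_weighted hq0 (by linarith : (0:ℝ) ≤ 1 - q)
          ht0.le zero_le_one (by ring)
        simpa using this
      have hK' : t ^ q * (1 + q * (1 - t)) ≤ 1 := by
        nlinarith [sq_nonneg (q * (1 - t)), htq0.le]
      have hK : t ^ q * ((q+1) * s - q * r) ≤ s := by
        have he : (q+1) * (s:ℝ) - q * r = s * (1 + q * (1 - t)) := by
          rw [← hst]; ring
        rw [he]
        calc t ^ q * ((s:ℝ) * (1 + q * (1 - t))) = s * (t ^ q * (1 + q * (1 - t))) := by ring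
          _ ≤ s * 1 := by
              apply mul_le_mul_of_nonneg_left hK' hs0.le
          _ = s := by ring
      -- gradient inequality (G) : t^q*t - m^q*m ≤ (q+1) * (t^q * (t - m))
      have hG : t ^ q * t - m ^ q * m ≤ (q+1) * (t ^ q * (t - m)) := by
        have hu : (0:ℝ) ≤ m / t := div_nonneg hm0.le ht0.le
        have hber : 1 + (q+1) * (m/t - 1) ≤ (m/t) ^ (q+1) := by
          have := one_add_mul_self_le_rpow_one_add (s := m/t - 1) (by linarith) (p := q+1)
            (by linarith)
          simpa using this
        have hdiv : (m/t) ^ (q+1) = (m ^ q * m) / (t ^ q * t) := by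
          rw [Real.div_rpow hm0.le ht0.le, Real.rpow_add hm0, Real.rpow_one,
            Real.rpow_add ht0, Real.rpow_one]
        rw [hdiv] at hber
        have htt : 0 < t ^ q * t := mul_pos htq0 ht0
        have h5 := mul_le_mul_of_nonneg_left hber htt.le
        rw [mul_div_cancel₀ _ htt.ne'] at h5
        have h6 : (t ^ q * t) * (m / t) = t ^ q * m := by
          field_simp
        have h8 : t ^ q * t * (1 + (q + 1) * (m / t - 1))
            = t ^ q * t + (q + 1) * ((t ^ q * t) * (m / t) - t ^ q * t) := by ring
        rw [h8, h6] at h5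
        nlinarith [h5]
      -- combine: (★)  r*t^q*(1-m) ≤ r - s*m + (s-r)*(m^q*m)
      have hstar : (r:ℝ) * t ^ q * (1 - m) ≤ (r:ℝ) - s * m + ((s:ℝ) - r) * (m ^ q * m) := by
        have h1 : ((s:ℝ) - r) * (t ^ q * t - m ^ q * m)
            ≤ ((s:ℝ) - r) * ((q+1) * (t ^ q * (t - m))) :=
          mul_le_mul_of_nonneg_left hG (by linarith)
        have h2 : (t ^ q * ((q+1) * s - q * r)) * (t - m) ≤ (s:ℝ) * (t - m) :=
          mul_le_mul_of_nonneg_right hK (by linarith)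
        have hst2 : (s:ℝ) * (t ^ q * t) = r * t ^ q := by
          calc (s:ℝ) * (t ^ q * t) = t ^ q * ((s:ℝ) * t) := by ring
            _ = r * t ^ q := by rw [hst]; ring
        nlinarith [h1, h2, hst2]
      -- combine with S bounds
      have h7 : (r:ℝ) - s * m + ((s:ℝ) - r) * (m ^ q * m)
          ≤ (S - r*m) + m ^ q * ((r:ℝ) - S) := by
        nlinarith [mul_nonneg (by linarith : (0:ℝ) ≤ S - ((r:ℝ) - ((s:ℝ) - r) * m))
          (by linarith : (0:ℝ) ≤ 1 - m ^ q)]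
      have hfinal : (r:ℝ) * t ^ q * (1 - m) ≤ (1 - m) * ∑ i ∈ Finset.range r, (w i) ^ q := by
        linarith
      have hfinal' : (1 - m) * ((r:ℝ) * t ^ q) ≤ (1 - m) * ∑ i ∈ Finset.range r, (w i) ^ q := by
        linarith
      exact le_of_mul_le_mul_left hfinal' h1m
  rw [hcpow]
  rw [show Real.rpow t q = t ^ q from rfl]
  rw [one_div, inv_mul_eq_div, le_div_iff₀ hr0]
  linarith [key]
end

section
/- Let p ∈ [0,1], let r and s be positive integers with r ≤ s and s ≥ 2, and let w ∈ ℝ^s be a nonnegative vector with Σ_{i=1}^s w_i = r, sorted so that w₁ ≥ w₂ ≥ … ≥ w_s ≥ 0. If p ≤ 1 − (ln r)/(ln s), then (1/r) Σ_{i=1}^r w_i^{1−p} ≥ (r/s)^{1−p}, with the convention 0⁰ = 0. -/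
lemma chord_le {q a b x : ℝ} (hq0 : 0 ≤ q) (hq1 : q ≤ 1) (ha : 0 ≤ a) (hab : a < b)
    (hx1 : a ≤ x) (hx2 : x ≤ b) :
    a ^ q + (x - a) * ((b ^ q - a ^ q) / (b - a)) ≤ x ^ q := by
  have hba : (0:ℝ) < b - a := sub_pos.2 hab
  have hb0 : (0:ℝ) ≤ b := le_trans ha hab.le
  have hcc := Real.concaveOn_rpow hq0 hq1
  have hmu : 0 ≤ (x - a)/(b-a) := div_nonneg (by linarith) hba.le
  have hla : 0 ≤ (b - x)/(b-a) := div_nonneg (by linarith) hba.le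
  have hsum : (b - x)/(b-a) + (x - a)/(b-a) = 1 := by field_simp; ring
  have h := hcc.2 (Set.mem_Ici.2 ha) (Set.mem_Ici.2 hb0) hla hmu hsum
  simp only [smul_eq_mul] at h
  have hx' : (b - x)/(b-a) * a + (x - a)/(b-a) * b = x := by field_simp; ring
  rw [hx'] at h
  have hv : (b - x)/(b-a) * a^q + (x - a)/(b-a) * b^q
      = a^q + (x - a) * ((b^q - a^q)/(b-a)) := by field_simp; ring
  rw [hv] at h
  exact h

lemma zero_chord_le {q a x : ℝ} (hq0 : 0 < q) (hq1 : q ≤ 1) (ha : 0 < a)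
    (hx0 : 0 ≤ x) (hxa : x ≤ a) :
    x * a ^ (q - 1) ≤ cpow x q := by
  rcases eq_or_lt_of_le hx0 with h0 | h0
  · simp [cpow, ← h0]
  · have hne : x ≠ 0 := ne_of_gt h0
    rw [cpow, if_neg hne]
    have h1 : x ^ q = x ^ (q - 1) * x := by
      rw [← Real.rpow_add_one hne]; norm_num
    have h2 : a ^ (q - 1) ≤ x ^ (q - 1) :=
      Real.rpow_le_rpow_of_nonpos h0 hxa (by linarith)
    show x * a ^ (q-1) ≤ Real.rpow x q
    calc x * a ^ (q-1) ≤ x * x ^ (q-1) := by nlinarith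
    _ = Real.rpow x q := by rw [show Real.rpow x q = x ^ q from rfl, h1]; ring


set_option maxHeartbeats 1600000 in
/-- **Lemma, condition (ii).** Let `p ∈ [0,1]`, `1 ≤ r ≤ s`,
`s ≥ 2`, and `w` a nonnegative, nonincreasing vector of length `s` summing to
`r`. If `p ≤ 1 - (ln r)/(ln s)`, then
`(1/r) ∑_{i=1}^r w_i^{1-p} ≥ (r/s)^{1-p}` (convention `0⁰ = 0`). -/
theorem sorted_sum_rpow_lower_bound_of_log (p : ℝ) (hp : p ∈ Set.Icc (0 : ℝ) 1)
    (r s : ℕ) (hr : 0 < r) (hrs : r ≤ s) (hs : 2 ≤ s)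
    (w : ℕ → ℝ) (hw0 : ∀ i < s, 0 ≤ w i)
    (hsorted : ∀ i j, i ≤ j → j < s → w j ≤ w i)
    (hsum : ∑ i ∈ Finset.range s, w i = r)
    (hplog : p ≤ 1 - Real.log r / Real.log s) :
    Real.rpow ((r : ℝ) / s) (1 - p) ≤
      (1 / (r : ℝ)) * ∑ i ∈ Finset.range r, cpow (w i) (1 - p) := by
  classical
  obtain ⟨hp0, hp1⟩ := hp
  set q : ℝ := 1 - p with hqdef
  have hq0 : 0 ≤ q := by rw [hqdef]; linarith
  have hq1 : q ≤ 1 := by rw [hqdef]; linarith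
  have hsR : (1:ℝ) < (s:ℝ) := by exact_mod_cast lt_of_lt_of_le one_lt_two hs
  have hs0 : (0:ℝ) < (s:ℝ) := by linarith
  have hr0 : (0:ℝ) < (r:ℝ) := by exact_mod_cast hr
  set a : ℝ := (r:ℝ)/(s:ℝ) with hadef
  have ha0 : 0 < a := div_pos hr0 hs0
  have ha1 : a ≤ 1 := (div_le_one hs0).2 (by exact_mod_cast hrs)
  have hlogs : 0 < Real.log s := Real.log_pos hsR
  have hqlog : Real.log r / Real.log s ≤ q := by rw [hqdef]; linarith
  have hkey : (r:ℝ) ≤ (s:ℝ) ^ q := by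
    have h2 : Real.log r ≤ q * Real.log s := by
      rw [div_le_iff₀ hlogs] at hqlog; linarith
    calc (r:ℝ) = Real.exp (Real.log r) := (Real.exp_log hr0).symm
      _ ≤ Real.exp (q * Real.log s) := Real.exp_le_exp.2 h2
      _ = (s:ℝ) ^ q := by rw [Real.rpow_def_of_pos hs0, mul_comm]
  have hwle : ∀ i, i < s → w i ≤ (r:ℝ) := by
    intro i hi
    rw [← hsum]
    exact Finset.single_le_sum (fun j hj => hw0 j (Finset.mem_range.1 hj))
      (Finset.mem_range.2 hi)
  have hw0a : a ≤ w 0 := by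
    have h1 : (r:ℝ) ≤ (s:ℝ) * w 0 := by
      have h2 : ∑ i ∈ Finset.range s, w i ≤ ∑ _i ∈ Finset.range s, w 0 :=
        Finset.sum_le_sum (fun i hi => hsorted 0 i (Nat.zero_le i) (Finset.mem_range.1 hi))
      rw [hsum, Finset.sum_const, Finset.card_range, nsmul_eq_mul] at h2
      exact h2
    rw [hadef, div_le_iff₀ hs0]
    linarith
  -- reduce to sum bound
  suffices main : (r:ℝ) * a ^ q ≤ ∑ i ∈ Finset.range r, cpow (w i) q by
    have hgoal : Real.rpow ((r:ℝ)/s) (1-p) = a ^ q := rfl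
    rw [hgoal, one_div, inv_mul_eq_div, le_div_iff₀ hr0]
    linarith
  by_cases hall : ∀ i, i < r → a ≤ w i
  · -- Case A
    calc (r:ℝ) * a^q = ∑ _i ∈ Finset.range r, a^q := by
          rw [Finset.sum_const, Finset.card_range, nsmul_eq_mul]
      _ ≤ ∑ i ∈ Finset.range r, cpow (w i) q := by
          apply Finset.sum_le_sum
          intro i hi
          have hai := hall i (Finset.mem_range.1 hi)
          have hpos : 0 < w i := lt_of_lt_of_le ha0 hai
          rw [cpow, if_neg hpos.ne']
          exact Real.rpow_le_rpow ha0.le hai hq0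
  · -- Case B
    push_neg at hall
    set t := Nat.find hall with htdef
    obtain ⟨htr, hwt⟩ : t < r ∧ w t < a := Nat.find_spec hall
    have hbig : ∀ i, i < t → a ≤ w i := by
      intro i hi
      by_contra hcon
      push_neg at hcon
      exact Nat.find_min hall hi ⟨lt_trans hi htr, hcon⟩
    have ht0 : 0 < t := by
      rcases Nat.eq_zero_or_pos t with h | h
      · exfalso; rw [h] at hwt; linarith
      · exact h
    have hr2 : 2 ≤ r := by omega
    have hq0' : 0 < q := by
      have hlr : 0 < Real.log r := Real.log_pos (by exact_mod_cast hr2)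
      exact lt_of_lt_of_le (div_pos hlr hlogs) hqlog
    have hrR2 : (2:ℝ) ≤ (r:ℝ) := by exact_mod_cast hr2
    have har : a < (r:ℝ) := by linarith
    have hsub : (0:ℝ) < (r:ℝ) - a := by linarith
    set σ : ℝ := ((r:ℝ)^q - a^q)/((r:ℝ) - a) with hσdef
    have hAqr : a ^ q ≤ (r:ℝ)^q := Real.rpow_le_rpow ha0.le har.le hq0
    have hσ0 : 0 ≤ σ := div_nonneg (by linarith) hsub.le
    set A : ℝ := a ^ q with hAdef
    set B : ℝ := a ^ (q - 1) with hBdef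
    have hA0 : 0 < A := Real.rpow_pos_of_pos ha0 q
    have hB0 : 0 < B := Real.rpow_pos_of_pos ha0 (q-1)
    have haB : B * a = A := by
      rw [hBdef, hAdef, ← Real.rpow_add_one ha0.ne' (q-1), sub_add_cancel]
    -- sums
    set S1 : ℝ := ∑ i ∈ Finset.range t, w i with hS1def
    set S2 : ℝ := ∑ i ∈ Finset.Ico t r, w i with hS2def
    set S3 : ℝ := ∑ i ∈ Finset.Ico r s, w i with hS3def
    have hts : t ≤ r := le_of_lt htr
    have hsplit1 : S1 + S2 = ∑ i ∈ Finset.range r, w i := by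
      rw [hS1def, hS2def, Finset.range_eq_Ico, Finset.range_eq_Ico]
      exact Finset.sum_Ico_consecutive w (Nat.zero_le t) hts
    have hsplit2 : (∑ i ∈ Finset.range r, w i) + S3 = (r:ℝ) := by
      rw [hS3def, ← hsum, Finset.range_eq_Ico, Finset.range_eq_Ico]
      exact Finset.sum_Ico_consecutive w (Nat.zero_le r) hrs
    set m : ℝ := w (r-1) with hmdef
    have hm0 : 0 ≤ m := hw0 _ (by omega)
    have htR : (1:ℝ) ≤ (t:ℝ) := by exact_mod_cast ht0
    have htrR : (t:ℝ) < (r:ℝ) := by exact_mod_cast htr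
    have hrsR : (r:ℝ) ≤ (s:ℝ) := by exact_mod_cast hrs
    have hrt0 : (0:ℝ) < (r:ℝ) - (t:ℝ) := by linarith
    have hcastrt : ((r - t : ℕ) : ℝ) = (r:ℝ) - (t:ℝ) := by
      rw [Nat.cast_sub hts]
    have hcastsr : ((s - r : ℕ) : ℝ) = (s:ℝ) - (r:ℝ) := by
      rw [Nat.cast_sub hrs]
    have hS2low : ((r:ℝ) - t) * m ≤ S2 := by
      have h2 : ∑ _i ∈ Finset.Ico t r, m ≤ S2 := by
        apply Finset.sum_le_sum
        intro i hi
        obtain ⟨h4, h5⟩ := Finset.mem_Ico.1 hi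
        exact hsorted i (r-1) (by omega) (by omega)
      rwa [Finset.sum_const, Nat.card_Ico, nsmul_eq_mul, hcastrt] at h2
    have hS3up : S3 ≤ ((s:ℝ) - r) * m := by
      have h2 : S3 ≤ ∑ _i ∈ Finset.Ico r s, m := by
        apply Finset.sum_le_sum
        intro i hi
        obtain ⟨h4, h5⟩ := Finset.mem_Ico.1 hi
        exact hsorted (r-1) i (by omega) h5
      rwa [Finset.sum_const, Nat.card_Ico, nsmul_eq_mul, hcastsr] at h2
    have hE0 : (t:ℝ) * a ≤ S1 := by
      have h2 : ∑ _i ∈ Finset.range t, a ≤ S1 :=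
        Finset.sum_le_sum (fun i hi => hbig i (Finset.mem_range.1 hi))
      rwa [Finset.sum_const, Finset.card_range, nsmul_eq_mul] at h2
    have hsmalla : ∀ i, t ≤ i → i < r → w i ≤ a := by
      intro i h4 h5
      exact le_trans (hsorted t i h4 (by omega)) hwt.le
    have hD0 : S2 ≤ ((r:ℝ) - t) * a := by
      have h2 : S2 ≤ ∑ _i ∈ Finset.Ico t r, a := by
        apply Finset.sum_le_sum
        intro i hi
        obtain ⟨h4, h5⟩ := Finset.mem_Ico.1 hi
        exact hsmalla i h4 h5
      rwa [Finset.sum_const, Nat.card_Ico, nsmul_eq_mul, hcastrt] at h2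
    -- per-term chord bounds, summed
    have hsum_big : (t:ℝ)*A + (S1 - (t:ℝ)*a)*σ ≤ ∑ i ∈ Finset.range t, cpow (w i) q := by
      have h2 : ∀ i ∈ Finset.range t, A + (w i - a)*σ ≤ cpow (w i) q := by
        intro i hi
        have hi' := Finset.mem_range.1 hi
        have hai := hbig i hi'
        have hpos : 0 < w i := lt_of_lt_of_le ha0 hai
        rw [cpow, if_neg hpos.ne']
        exact chord_le hq0 hq1 ha0.le har hai (hwle i (by omega))
      have h3 := Finset.sum_le_sum h2
      have h4 : ∑ i ∈ Finset.range t, (A + (w i - a)*σ)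
          = (t:ℝ)*A + (S1 - (t:ℝ)*a)*σ := by
        rw [Finset.sum_add_distrib, Finset.sum_const, Finset.card_range, nsmul_eq_mul,
          ← Finset.sum_mul, Finset.sum_sub_distrib, Finset.sum_const, Finset.card_range,
          nsmul_eq_mul]
      rwa [h4] at h3
    have hsum_small : S2 * B ≤ ∑ i ∈ Finset.Ico t r, cpow (w i) q := by
      have h2 : ∀ i ∈ Finset.Ico t r, w i * B ≤ cpow (w i) q := by
        intro i hi
        obtain ⟨h4, h5⟩ := Finset.mem_Ico.1 hi
        exact zero_chord_le hq0' hq1 ha0 (hw0 i (by omega)) (hsmalla i h4 h5)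
      have h3 := Finset.sum_le_sum h2
      rwa [← Finset.sum_mul] at h3
    have hΦsplit : ∑ i ∈ Finset.range t, cpow (w i) q + ∑ i ∈ Finset.Ico t r, cpow (w i) q
        = ∑ i ∈ Finset.range r, cpow (w i) q := by
      rw [Finset.range_eq_Ico, Finset.range_eq_Ico]
      exact Finset.sum_Ico_consecutive _ (Nat.zero_le t) hts
    -- arithmetic facts
    have has : a * (s:ℝ) = (r:ℝ) := div_mul_cancel₀ _ hs0.ne'
    have hRA : (r:ℝ) * A ≤ (r:ℝ)^q := by
      have hA_eq : A = (r:ℝ)^q / (s:ℝ)^q := by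
        rw [hAdef, hadef, Real.div_rpow hr0.le hs0.le]
      have hsq0 : (0:ℝ) < (s:ℝ)^q := Real.rpow_pos_of_pos hs0 q
      have hrq0 : (0:ℝ) < (r:ℝ)^q := Real.rpow_pos_of_pos hr0 q
      rw [hA_eq, ← mul_div_assoc, div_le_iff₀ hsq0]
      have h5 := mul_le_mul_of_nonneg_left hkey hrq0.le
      linarith
    have hσmul : σ * ((r:ℝ) - a) = (r:ℝ)^q - A := by
      rw [hσdef, hAdef]; field_simp
    -- constraint: E(r-t) ≥ D(s-t)
    have step1 : (r:ℝ) * ((r:ℝ)-t) ≤ (S1 + S2 + ((s:ℝ)-r)*m) * ((r:ℝ)-t) := by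
      apply mul_le_mul_of_nonneg_right _ hrt0.le
      linarith
    have hsr0 : (0:ℝ) ≤ (s:ℝ) - r := by linarith
    have step2 : ((s:ℝ)-r)*(((r:ℝ)-t)*m) ≤ ((s:ℝ)-r)*S2 :=
      mul_le_mul_of_nonneg_left hS2low hsr0
    have C1 : (((r:ℝ)-t)*a - S2) * ((s:ℝ)-t) ≤ (S1 - (t:ℝ)*a) * ((r:ℝ)-t) := by
      have has2 : a * (s:ℝ) * ((r:ℝ)-t) = (r:ℝ) * ((r:ℝ)-t) := by rw [has]
      linarith [step1, step2, has2]
    -- key: B(r-t) ≤ σ(s-t)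
    have K : B * ((r:ℝ)-t) ≤ σ * ((s:ℝ)-t) := by
      have k1 : ((r:ℝ)-1)*A ≤ (r:ℝ)^q - A := by linarith
      have k2 : ((r:ℝ)-t)*((s:ℝ)-1) ≤ ((r:ℝ)-1)*((s:ℝ)-t) := by
        have h7 := mul_nonneg (by linarith : (0:ℝ) ≤ (t:ℝ)-1) (by linarith : (0:ℝ) ≤ (s:ℝ)-(r:ℝ))
        linarith
      have hst0 : (0:ℝ) ≤ (s:ℝ) - t := by linarith
      have k3 : A*(((r:ℝ)-t)*((s:ℝ)-1)) ≤ ((r:ℝ)^q - A)*((s:ℝ)-t) := by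
        linarith [mul_le_mul_of_nonneg_left k2 hA0.le,
          mul_le_mul_of_nonneg_right k1 hst0]
      have k4 : A*(((r:ℝ)-t)*((s:ℝ)-1)) = B*((r:ℝ)-t)*((r:ℝ)-a) := by
        have h8 : a * ((s:ℝ)-1) = (r:ℝ) - a := by rw [mul_sub, has]; ring
        linear_combination (-(((r:ℝ)-t)*((s:ℝ)-1)))*haB + (B*((r:ℝ)-t))*h8
      rw [k4] at k3
      have k5 : σ * ((s:ℝ)-t) * ((r:ℝ)-a) = ((r:ℝ)^q - A)*((s:ℝ)-t) := by
        rw [← hσmul]; ring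
      have k6 : B*((r:ℝ)-t)*((r:ℝ)-a) ≤ σ * ((s:ℝ)-t) * ((r:ℝ)-a) := by
        rw [k5]; exact k3
      exact le_of_mul_le_mul_right k6 hsub
    -- final: σ E ≥ B D
    have hfinal : B * (((r:ℝ)-t)*a - S2) ≤ σ * (S1 - (t:ℝ)*a) := by
      rcases le_or_gt (((r:ℝ)-t)*a - S2) 0 with hD | hD
      · have h1 : B * (((r:ℝ)-t)*a - S2) ≤ 0 := mul_nonpos_of_nonneg_of_nonpos hB0.le hD
        have h2 : 0 ≤ σ * (S1 - (t:ℝ)*a) := mul_nonneg hσ0 (by linarith)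
        linarith
      · have h1 := mul_le_mul_of_nonneg_left C1 hσ0
        have h2 := mul_le_mul_of_nonneg_left K hD.le
        have h3 : (B * (((r:ℝ)-t)*a - S2)) * ((r:ℝ)-t) ≤ (σ * (S1 - (t:ℝ)*a)) * ((r:ℝ)-t) := by
          linarith [h1, h2]
        exact le_of_mul_le_mul_right h3 hrt0
    -- assemble
    have hBa2 : ((r:ℝ)-t)*(B*a) = ((r:ℝ)-t)*A := by rw [haB]
    calc (r:ℝ) * A ≤ (t:ℝ)*A + (S1 - (t:ℝ)*a)*σ + S2 * B := by linarith [hfinal, hBa2]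
      _ ≤ ∑ i ∈ Finset.range t, cpow (w i) q + ∑ i ∈ Finset.Ico t r, cpow (w i) q := by
          linarith [hsum_big, hsum_small]
      _ = ∑ i ∈ Finset.range r, cpow (w i) q := hΦsplit
end
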